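/- Sequential associativity of rooted insertion of rooted trees: let V₁, V₂, V₃ be pairwise disjoint finite sets with *₁ ∈ V₁ and *₂ ∈ V₂, and let (t₁, r₁), (t₂, r₂), (t₃, r₃) be rooted trees on V₁, V₂, V₃ respectively. Then ((t₁, r₁) ∘_{*₁} (t₂, r₂)) ∘_{*₂} (t₃, r₃) = (t₁, r₁) ∘_{*₁} ((t₂, r₂) ∘_{*₂} (t₃, r₃)), as elements of the free module on rooted trees on (V₁ \ {*₁}) ∪ (V₂ \ {*₂}) ∪ V₃, with rooted insertion extended bilinearly. (This is an operad axiom of the theorem that rooted connected multigraphs with rooted insertion form an operad, restricted to the suboperad of rooted trees, which is the pre-Lie operad.) -/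

import Mathlib

/-!
Common framework: a simple graph on a finite vertex set `V ⊆ α` is a finite set of
unordered pairs (`Sym2 α`) of distinct elements of `V`.  The insertion
`g₁ ∘_star g₂` is an element of the free `ℚ`-module `Finset (Sym2 α) →₀ ℚ`
on the set of edge sets.
-/

open scoped Classical

variable {α : Type*} [DecidableEq α]

/-- The finite edge set `g` is a simple graph on the vertex set `V`. -/
def IsGraphOn (V : Finset α) (g : Finset (Sym2 α)) : Prop :=
  ∀ e ∈ g, ¬ e.IsDiag ∧ ∀ v ∈ e, v ∈ V

/-- The two endpoints of an unordered pair, as a `Finset`. -/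
def sym2Finset : Sym2 α → Finset α :=
  Sym2.lift ⟨fun a b => {a, b}, by intro a b; simp [Finset.pair_comm]⟩

/-- Neighbours of `x` in the edge set `g`. -/
def nbrs (g : Finset (Sym2 α)) (x : α) : Finset α :=
  (g.biUnion sym2Finset).filter fun v => s(x, v) ∈ g

/-- Remove the vertex `x` (and all incident edges) from the edge set `g`. -/
def delG (g : Finset (Sym2 α)) (x : α) : Finset (Sym2 α) :=
  g.filter fun e => x ∉ e

/-- The edges `{v, f v}` obtained from a reconnection map `f : C → V₂`. -/
def newEdges (C V₂ : Finset α) (f : {v // v ∈ C} → {w // w ∈ V₂}) : Finset (Sym2 α) :=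
  Finset.univ.image fun v : {v // v ∈ C} => s(v.1, (f v).1)

/-- Insertion `g₁ ∘_star g₂` of a graph `g₂` on the vertex set `V₂` into a graph `g₁`:
the sum, over all maps `f` from the neighbours of `star` in `g₁` to `V₂`, of the graph
obtained by deleting `star` from `g₁`, adding `g₂`, and reconnecting along `f`. -/
noncomputable def ins (V₂ : Finset α) (star : α) (g₁ g₂ : Finset (Sym2 α)) :
    Finset (Sym2 α) →₀ ℚ :=
  ∑ f : ({v // v ∈ nbrs g₁ star} → {w // w ∈ V₂}),
    Finsupp.single (delG g₁ star ∪ g₂ ∪ newEdges (nbrs g₁ star) V₂ f) 1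

/-- Bilinear extension of the insertion to the free module on graphs. -/
noncomputable def insM (V₂ : Finset α) (star : α) (x y : Finset (Sym2 α) →₀ ℚ) :
    Finset (Sym2 α) →₀ ℚ :=
  x.sum fun g₁ c₁ => y.sum fun g₂ c₂ => (c₁ * c₂) • ins V₂ star g₁ g₂

/-- The simple graph associated with an edge set. -/
def toSG (g : Finset (Sym2 α)) : SimpleGraph α where
  Adj x y := x ≠ y ∧ s(x, y) ∈ g
  symm := by
    constructor
    intro x y h
    exact ⟨h.1.symm, by rw [Sym2.eq_swap]; exact h.2⟩
  loopless := by
    constructor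
    intro x h
    exact h.1 rfl

/-- The edge set `g` is connected on `V`: any two vertices of `V` are joined by a path. -/
def IsConnOn (V : Finset α) (g : Finset (Sym2 α)) : Prop :=
  ∀ x ∈ V, ∀ y ∈ V, (toSG g).Reachable x y

/-- A tree on `V`: a connected acyclic simple graph on `V`. -/
def IsTreeOn (V : Finset α) (g : Finset (Sym2 α)) : Prop :=
  IsGraphOn V g ∧ IsConnOn V g ∧ (toSG g).IsAcyclic

/-- The neighbours `p` of `star` in `g` such that `r` is reachable from `p` after deleting
`star`.  For a tree `g` and `star ≠ r` this is the singleton consisting of the unique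
neighbour of `star` on the path from `star` to `r`. -/
noncomputable def towards (g : Finset (Sym2 α)) (star r : α) : Finset α :=
  (nbrs g star).filter fun p => (toSG (delG g star)).Reachable p r

/-- Rooted insertion of a rooted tree `t₂` (with vertex set `V₂` and root `t₂.2`)
into a rooted tree `t₁` at the vertex `star`: delete `star`, reconnect the child ends
(neighbours of `star` not towards the root) to arbitrary vertices of `V₂`, and
reconnect the parent end (the neighbour towards the root, when `star ≠ t₁.2`) to the
root of `t₂`; the new root is `t₁.2` unless `star = t₁.2`, in which case it is `t₂.2`. -/
noncomputable def rins (V₂ : Finset α) (star : α)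
    (t₁ t₂ : Finset (Sym2 α) × α) : (Finset (Sym2 α) × α) →₀ ℚ :=
  let C : Finset α :=
    if star = t₁.2 then nbrs t₁.1 star else nbrs t₁.1 star \ towards t₁.1 star t₁.2
  let extra : Finset (Sym2 α) :=
    if star = t₁.2 then ∅ else (towards t₁.1 star t₁.2).image fun p => s(p, t₂.2)
  let r' : α := if star = t₁.2 then t₂.2 else t₁.2
  ∑ f : ({v // v ∈ C} → {w // w ∈ V₂}),
    Finsupp.single (delG t₁.1 star ∪ t₂.1 ∪ newEdges C V₂ f ∪ extra, r') 1

/-- Bilinear extension of the rooted insertion to the free module on rooted graphs. -/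
noncomputable def rinsM (V₂ : Finset α) (star : α)
    (x y : (Finset (Sym2 α) × α) →₀ ℚ) : (Finset (Sym2 α) × α) →₀ ℚ :=
  x.sum fun t₁ c₁ => y.sum fun t₂ c₂ => (c₁ * c₂) • rins V₂ star t₁ t₂


section Basics
variable {α : Type*} [DecidableEq α]

lemma mem_sym2Finset {v : α} {e : Sym2 α} : v ∈ sym2Finset e ↔ v ∈ e := by
  induction e using Sym2.ind with
  | _ a b => simp [sym2Finset, Sym2.mem_iff, Finset.mem_insert]

lemma mem_nbrs {g : Finset (Sym2 α)} {x v : α} : v ∈ nbrs g x ↔ s(x, v) ∈ g := by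
  constructor
  · intro h; exact (Finset.mem_filter.mp h).2
  · intro h
    refine Finset.mem_filter.mpr ⟨Finset.mem_biUnion.mpr ⟨s(x,v), h, ?_⟩, h⟩
    simp [mem_sym2Finset]

lemma toSG_mono {g g' : Finset (Sym2 α)} (h : g ⊆ g') : toSG g ≤ toSG g' := by
  intro a b hab; exact ⟨hab.1, h hab.2⟩

lemma delG_subset (g : Finset (Sym2 α)) (x : α) : delG g x ⊆ g := Finset.filter_subset _ _

lemma mem_delG {g : Finset (Sym2 α)} {x : α} {e : Sym2 α} :
    e ∈ delG g x ↔ e ∈ g ∧ x ∉ e := Finset.mem_filter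

lemma delG_union (a b : Finset (Sym2 α)) (x : α) :
    delG (a ∪ b) x = delG a x ∪ delG b x := Finset.filter_union _ _ _

lemma delG_eq_self {g : Finset (Sym2 α)} {x : α} (h : ∀ e ∈ g, x ∉ e) :
    delG g x = g := Finset.filter_eq_self.mpr h

lemma nbrs_union (a b : Finset (Sym2 α)) (x : α) :
    nbrs (a ∪ b) x = nbrs a x ∪ nbrs b x := by
  ext v; simp [mem_nbrs, Finset.mem_union]

lemma nbrs_eq_empty {g : Finset (Sym2 α)} {x : α} (h : ∀ e ∈ g, x ∉ e) :
    nbrs g x = ∅ := by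
  ext v
  simp only [mem_nbrs, Finset.notMem_empty, iff_false]
  intro hm; exact h _ hm (by simp)

lemma walk_delG_support {g : Finset (Sym2 α)} {star v x : α}
    (w : (toSG (delG g star)).Walk v x) (hv : v ≠ star) : star ∉ w.support := by
  induction w with
  | nil => simpa using hv.symm
  | cons h p ih =>
    rename_i a b c
    have hb : b ≠ star := by
      have := (mem_delG.mp h.2).2
      intro hbs; exact this (by rw [← hbs]; simp)
    simp only [SimpleGraph.Walk.support_cons, List.mem_cons, not_or]
    exact ⟨fun hh => hv hh.symm, ih hb⟩

lemma walk_to_delG {g : Finset (Sym2 α)} {star v x : α}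
    (w : (toSG g).Walk v x) (h : star ∉ w.support) :
    (toSG (delG g star)).Reachable v x := by
  induction w with
  | nil => exact SimpleGraph.Reachable.refl _
  | cons hadj p ih =>
    rename_i a b c
    simp only [SimpleGraph.Walk.support_cons, List.mem_cons, not_or] at h
    have hb : star ≠ b := by
      intro hh; exact h.2 (hh ▸ p.start_mem_support)
    have : (toSG (delG g star)).Adj a b := by
      refine ⟨hadj.1, mem_delG.mpr ⟨hadj.2, ?_⟩⟩
      simp only [Sym2.mem_iff, not_or]
      exact ⟨fun hh => h.1 hh, fun hh => hb hh⟩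
    exact this.reachable.trans (ih h.2)

lemma unique_nbr_reach {g : Finset (Sym2 α)} (hac : (toSG g).IsAcyclic) {star u u' x : α}
    (hu : s(star, u) ∈ g) (hu' : s(star, u') ∈ g) (hne : u ≠ star) (hne' : u' ≠ star)
    (h : (toSG (delG g star)).Reachable u x)
    (h' : (toSG (delG g star)).Reachable u' x) : u = u' := by
  obtain ⟨w⟩ := h
  obtain ⟨w'⟩ := h'
  have hle : toSG (delG g star) ≤ toSG g := toSG_mono (delG_subset _ _)
  have hsup : star ∉ w.support := walk_delG_support w hne
  have hsup' : star ∉ w'.support := walk_delG_support w' hne'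
  let W : (toSG g).Walk u x := w.mapLe hle
  let W' : (toSG g).Walk u' x := w'.mapLe hle
  have hWsup : star ∉ W.support := by
    simpa [W, SimpleGraph.Walk.mapLe, SimpleGraph.Walk.support_map] using hsup
  have hWsup' : star ∉ W'.support := by
    simpa [W', SimpleGraph.Walk.mapLe, SimpleGraph.Walk.support_map] using hsup'
  have hPsup : star ∉ W.toPath.1.support :=
    fun hh => hWsup (SimpleGraph.Walk.support_bypass_subset _ hh)
  have hPsup' : star ∉ W'.toPath.1.support :=
    fun hh => hWsup' (SimpleGraph.Walk.support_bypass_subset _ hh)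
  have hadj : (toSG g).Adj star u := ⟨hne.symm, hu⟩
  have hadj' : (toSG g).Adj star u' := ⟨hne'.symm, hu'⟩
  let Q : (toSG g).Walk star x := SimpleGraph.Walk.cons hadj W.toPath.1
  let Q' : (toSG g).Walk star x := SimpleGraph.Walk.cons hadj' W'.toPath.1
  have hQ : Q.IsPath := by
    rw [SimpleGraph.Walk.cons_isPath_iff]
    exact ⟨W.toPath.2, hPsup⟩
  have hQ' : Q'.IsPath := by
    rw [SimpleGraph.Walk.cons_isPath_iff]
    exact ⟨W'.toPath.2, hPsup'⟩
  have := (SimpleGraph.isAcyclic_iff_path_unique.mp hac) ⟨Q, hQ⟩ ⟨Q', hQ'⟩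
  have hQQ : Q = Q' := congrArg Subtype.val this
  have : Q.getVert 1 = Q'.getVert 1 := by rw [hQQ]
  simpa [Q, Q', SimpleGraph.Walk.getVert_cons_succ] using this

lemma towards_eq_singleton {V : Finset α} {t : Finset (Sym2 α)} (ht : IsTreeOn V t)
    {star r : α} (hstar : star ∈ V) (hr : r ∈ V) (hne : star ≠ r) :
    ∃ p, s(star, p) ∈ t ∧ p ≠ star ∧ towards t star r = {p} := by
  obtain ⟨w⟩ := ht.2.1 star hstar r hr
  obtain ⟨P, hP⟩ := w.toPath
  cases P with
  | nil => exact absurd rfl hne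
  | cons hadj q =>
    rename_i p₀
    have hq : q.IsPath ∧ star ∉ q.support := (SimpleGraph.Walk.cons_isPath_iff _ _).mp hP
    have hreach : (toSG (delG t star)).Reachable p₀ r := walk_to_delG q hq.2
    have hp₀star : p₀ ≠ star := fun hh => hadj.1 hh.symm
    refine ⟨p₀, hadj.2, hp₀star, ?_⟩
    ext v
    simp only [towards, Finset.mem_filter, Finset.mem_singleton, mem_nbrs]
    constructor
    · rintro ⟨hv, hvr⟩
      have hvstar : v ≠ star := by
        intro hh
        exact (ht.1 _ hv).1 (by rw [hh]; exact Sym2.mk_isDiag_iff.mpr rfl)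
      exact unique_nbr_reach ht.2.2 hv hadj.2 hvstar hp₀star hvr hreach
    · rintro rfl
      exact ⟨mem_nbrs.mp (mem_nbrs.mpr hadj.2), hreach⟩

end Basics

section Sep
variable {α : Type*} [DecidableEq α]

lemma sep_walk {A B : Finset (Sym2 α)} {D : Finset α} {φ : α → α} {VA VB : Finset α}
    (hA : ∀ e ∈ A, ∀ v ∈ e, v ∈ VA) (hB : ∀ e ∈ B, ∀ v ∈ e, v ∈ VB)
    (hdisj : Disjoint VA VB)
    (hD : ∀ u ∈ D, u ∈ VA ∧ φ u ∈ VB)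
    (huniq : ∀ u ∈ D, ∀ u' ∈ D, (toSG A).Reachable u u' → u = u')
    {x y : α} (w : (toSG (A ∪ B ∪ D.image fun u => s(u, φ u))).Walk x y) :
    (x ∈ VA → y ∈ VA → ((toSG A).Reachable x y ∨
        ∃ u ∈ D, ∃ u' ∈ D, (toSG A).Reachable x u ∧ (toSG B).Reachable (φ u) (φ u') ∧
          (toSG A).Reachable u' y))
    ∧ (x ∈ VA → y ∈ VB → ∃ u ∈ D, (toSG A).Reachable x u ∧ (toSG B).Reachable (φ u) y)
    ∧ (x ∈ VB → y ∈ VA → ∃ u' ∈ D, (toSG B).Reachable x (φ u') ∧ (toSG A).Reachable u' y)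
    ∧ (x ∈ VB → y ∈ VB → (toSG B).Reachable x y) := by
  have hnb : ∀ a : α, a ∈ VA → a ∈ VB → False :=
    fun a h1 h2 => Finset.disjoint_left.mp hdisj h1 h2
  induction w with
  | nil =>
    rename_i a
    refine ⟨fun _ _ => Or.inl (SimpleGraph.Reachable.refl _),
      fun h1 h2 => absurd (hnb a h1 h2) not_false,
      fun h1 h2 => absurd (hnb a h2 h1) not_false,
      fun _ _ => SimpleGraph.Reachable.refl _⟩
  | cons hadj w' ih =>
    rename_i x z y
    have he := hadj.2
    rcases Finset.mem_union.mp he with h | hX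
    · rcases Finset.mem_union.mp h with hA' | hB'
      · -- edge in A
        have hxA : x ∈ VA := hA _ hA' x (by simp)
        have hzA : z ∈ VA := hA _ hA' z (by simp)
        have adjA : (toSG A).Adj x z := ⟨hadj.1, hA'⟩
        refine ⟨fun _ hyA => ?_, fun _ hyB => ?_,
          fun hxB _ => absurd (hnb x hxA hxB) not_false,
          fun hxB _ => absurd (hnb x hxA hxB) not_false⟩
        · rcases ih.1 hzA hyA with h1 | ⟨u, hu, u', hu', r1, r2, r3⟩
          · exact Or.inl (adjA.reachable.trans h1)
          · exact Or.inr ⟨u, hu, u', hu', adjA.reachable.trans r1, r2, r3⟩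
        · obtain ⟨u, hu, r1, r2⟩ := ih.2.1 hzA hyB
          exact ⟨u, hu, adjA.reachable.trans r1, r2⟩
      · -- edge in B
        have hxB : x ∈ VB := hB _ hB' x (by simp)
        have hzB : z ∈ VB := hB _ hB' z (by simp)
        have adjB : (toSG B).Adj x z := ⟨hadj.1, hB'⟩
        refine ⟨fun hxA _ => absurd (hnb x hxA hxB) not_false,
          fun hxA _ => absurd (hnb x hxA hxB) not_false,
          fun _ hyA => ?_, fun _ hyB => ?_⟩
        · obtain ⟨u', hu', r1, r2⟩ := ih.2.2.1 hzB hyA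
          exact ⟨u', hu', adjB.reachable.trans r1, r2⟩
        · exact adjB.reachable.trans (ih.2.2.2 hzB hyB)
    · -- cross edge
      obtain ⟨u₀, hu₀, hs⟩ := Finset.mem_image.mp hX
      rcases Sym2.eq_iff.mp hs with ⟨hxu, hzu⟩ | ⟨hzu, hxu⟩
      · -- x = u₀, z = φ u₀
        obtain ⟨rfl, hzu⟩ : u₀ = x ∧ φ u₀ = z := ⟨hxu, hzu⟩
        have hxA : u₀ ∈ VA := (hD u₀ hu₀).1
        have hzB : z ∈ VB := hzu ▸ (hD u₀ hu₀).2
        refine ⟨fun _ hyA => ?_, fun _ hyB => ?_,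
          fun hxB _ => absurd (hnb u₀ hxA hxB) not_false,
          fun hxB _ => absurd (hnb u₀ hxA hxB) not_false⟩
        · obtain ⟨u', hu', r1, r2⟩ := ih.2.2.1 hzB hyA
          exact Or.inr ⟨u₀, hu₀, u', hu', SimpleGraph.Reachable.refl _, hzu ▸ r1, r2⟩
        · exact ⟨u₀, hu₀, SimpleGraph.Reachable.refl _, hzu ▸ ih.2.2.2 hzB hyB⟩
      · -- z = u₀, x = φ u₀
        obtain ⟨rfl, hxu⟩ : u₀ = z ∧ φ u₀ = x := ⟨hzu, hxu⟩
        have hzA : u₀ ∈ VA := (hD u₀ hu₀).1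
        have hxB : x ∈ VB := hxu ▸ (hD u₀ hu₀).2
        refine ⟨fun hxA _ => absurd (hnb x hxA hxB) not_false,
          fun hxA _ => absurd (hnb x hxA hxB) not_false,
          fun _ hyA => ?_, fun _ hyB => ?_⟩
        · rcases ih.1 hzA hyA with h1 | ⟨u, hu, u', hu', r1, r2, r3⟩
          · exact ⟨u₀, hu₀, hxu ▸ SimpleGraph.Reachable.refl _, h1⟩
          · have he2 : u₀ = u := huniq u₀ hu₀ u hu r1
            refine ⟨u', hu', ?_, r3⟩
            rw [← hxu, he2]; exact r2
        · obtain ⟨u, hu, r1, r2⟩ := ih.2.1 hzA hyB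
          have he2 : u₀ = u := huniq u₀ hu₀ u hu r1
          rw [← hxu, he2]; exact r2

end Sep

section Comp
variable {α : Type*} [DecidableEq α]

lemma mem_newEdges {C V : Finset α} {f : {v // v ∈ C} → {w // w ∈ V}} {e : Sym2 α} :
    e ∈ newEdges C V f ↔ ∃ v : {v // v ∈ C}, s(v.1, (f v).1) = e := by
  simp [newEdges]

lemma graphOn_vert {V : Finset α} {g : Finset (Sym2 α)} (h : IsGraphOn V g)
    {e : Sym2 α} (he : e ∈ g) {v : α} (hv : v ∈ e) : v ∈ V := (h e he).2 v hv

lemma nbrs_subset_of_graphOn {V : Finset α} {g : Finset (Sym2 α)} (h : IsGraphOn V g)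
    (x : α) : nbrs g x ⊆ V := by
  intro v hv
  exact graphOn_vert h (mem_nbrs.mp hv) (by simp)

lemma nbrs_ne_self {V : Finset α} {g : Finset (Sym2 α)} (h : IsGraphOn V g)
    {x v : α} (hv : v ∈ nbrs g x) : v ≠ x := by
  intro hh
  exact (h _ (mem_nbrs.mp hv)).1 (by rw [hh]; exact Sym2.mk_isDiag_iff.mpr rfl)

lemma not_mem_edge_of_graphOn {V : Finset α} {g : Finset (Sym2 α)} (h : IsGraphOn V g)
    {x : α} (hx : x ∉ V) : ∀ e ∈ g, x ∉ e :=
  fun e he hxe => hx (graphOn_vert h he hxe)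

lemma nbrs_newEdges {C V : Finset α} {f : {v // v ∈ C} → {w // w ∈ V}} {star : α}
    (h : star ∉ C) :
    nbrs (newEdges C V f) star
      = C.filter fun v => ∃ hv : v ∈ C, (f ⟨v, hv⟩).1 = star := by
  ext v
  simp only [mem_nbrs, mem_newEdges, Finset.mem_filter]
  constructor
  · rintro ⟨⟨u, hu⟩, he⟩
    rcases Sym2.eq_iff.mp he with ⟨h1, h2⟩ | ⟨h1, h2⟩
    · exact absurd (h1 ▸ hu) h
    · subst h1; exact ⟨hu, hu, h2⟩
  · rintro ⟨hvC, hv2, hfv⟩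
    exact ⟨⟨v, hv2⟩, by rw [hfv, Sym2.eq_swap]⟩

lemma delG_newEdges {C V : Finset α} {f : {v // v ∈ C} → {w // w ∈ V}} {star : α}
    (h : star ∉ C) :
    delG (newEdges C V f) star
      = (C.attach.filter fun v => (f v).1 ≠ star).image fun v => s(v.1, (f v).1) := by
  ext e
  simp only [mem_delG, mem_newEdges, Finset.mem_image, Finset.mem_filter, Finset.mem_attach,
    true_and]
  constructor
  · rintro ⟨⟨u, hu⟩, hst⟩
    refine ⟨u, fun hh => hst ?_, hu⟩
    rw [← hu, ← hh]; simp
  · rintro ⟨u, hne, hu⟩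
    refine ⟨⟨u, hu⟩, ?_⟩
    rw [← hu]
    simp only [Sym2.mem_iff, not_or]
    exact ⟨fun hh => h (hh ▸ u.2), fun hh => hne hh.symm⟩

lemma newEdges_subset_pairs {C V : Finset α} {f : {v // v ∈ C} → {w // w ∈ V}} :
    ∀ e ∈ newEdges C V f, ∀ v ∈ e, v ∈ C ∪ V := by
  intro e he v hv
  obtain ⟨u, hu⟩ := mem_newEdges.mp he
  rw [← hu] at hv
  rcases Sym2.mem_iff.mp hv with rfl | rfl
  · exact Finset.mem_union_left _ u.2
  · exact Finset.mem_union_right _ (f u).2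

end Comp

section Plumb
variable {α : Type*} [DecidableEq α]

lemma rinsM_left_eq (V : Finset α) (star : α) (x : (Finset (Sym2 α) × α) →₀ ℚ)
    (b : Finset (Sym2 α) × α) :
    rinsM V star x (Finsupp.single b 1) = x.sum fun g₁ c₁ => c₁ • rins V star g₁ b := by
  unfold rinsM
  congr 1
  funext g₁ c₁
  rw [Finsupp.sum_single_index (by simp)]
  simp

lemma rinsM_sum_left {ι : Type*} [Fintype ι] (V : Finset α) (star : α)
    (a : ι → (Finset (Sym2 α) × α)) (b : Finset (Sym2 α) × α) :
    rinsM V star (∑ i, Finsupp.single (a i) 1) (Finsupp.single b 1)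
      = ∑ i, rins V star (a i) b := by
  rw [rinsM_left_eq]
  rw [← Finsupp.sum_finsetSum_index (by intro i; simp) (by intro i c1 c2; rw [add_smul])]
  refine Finset.sum_congr rfl fun i _ => ?_
  rw [Finsupp.sum_single_index (by simp)]
  simp

lemma rinsM_sum_right {ι : Type*} [Fintype ι] (V : Finset α) (star : α)
    (a : Finset (Sym2 α) × α) (b : ι → (Finset (Sym2 α) × α)) :
    rinsM V star (Finsupp.single a 1) (∑ i, Finsupp.single (b i) 1)
      = ∑ i, rins V star a (b i) := by
  unfold rinsM
  rw [Finsupp.sum_single_index]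
  · rw [← Finsupp.sum_finsetSum_index (by intro i; simp) (by intro i c1 c2; simp [mul_add, add_smul])]
    refine Finset.sum_congr rfl fun i _ => ?_
    rw [Finsupp.sum_single_index (by simp)]
    simp
  · rw [← Finsupp.sum_finsetSum_index (by intro i; simp) (by intro i c1 c2; simp [mul_add, add_smul])]
    simp

end Plumb

section Sumeq
variable {α : Type*} [DecidableEq α]

/-- Vertices of `C₁` sent to `star₂` by `f`. -/
noncomputable def FfD (C₁ : Finset α) {V₂ : Finset α} (star₂ : α)
    (f : {v // v ∈ C₁} → {w // w ∈ V₂}) : Finset α :=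
  C₁.filter fun v => ∃ hv : v ∈ C₁, (f ⟨v, hv⟩).1 = star₂

/-- The new edges of `f` avoiding `star₂`. -/
noncomputable def NEmixD (C₁ : Finset α) {V₂ : Finset α} (star₂ : α)
    (f : {v // v ∈ C₁} → {w // w ∈ V₂}) : Finset (Sym2 α) :=
  (C₁.attach.filter fun v => (f v).1 ≠ star₂).image fun v => s(v.1, (f v).1)

noncomputable def NE2D (C₁ : Finset α) {V₂ V₃ : Finset α} (star₂ : α)
    (f : {v // v ∈ C₁} → {w // w ∈ V₂}) (G : {v // v ∈ C₁} → {w // w ∈ V₃}) :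
    Finset (Sym2 α) :=
  (C₁.attach.filter fun v => (f v).1 = star₂).image fun v => s(v.1, (G v).1)

lemma mem_FfD {C₁ V₂ : Finset α} {star₂ : α} {f : {v // v ∈ C₁} → {w // w ∈ V₂}}
    {v : {v // v ∈ C₁}} (h : (f v).1 = star₂) : v.1 ∈ FfD C₁ star₂ f :=
  Finset.mem_filter.mpr ⟨v.2, v.2, h⟩

lemma of_mem_FfD {C₁ V₂ : Finset α} {star₂ : α} {f : {v // v ∈ C₁} → {w // w ∈ V₂}}
    {v : {v // v ∈ C₁}} (h : v.1 ∈ FfD C₁ star₂ f) : (f v).1 = star₂ := by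
  obtain ⟨_, hv, he⟩ := Finset.mem_filter.mp h
  exact he

lemma sumeq {C₁ C₂ V₂ V₃ : Finset α} {star₂ d₃ : α}
    (hstar₂ : star₂ ∈ V₂) (hd₃ : d₃ ∈ V₃)
    (h1V2 : Disjoint C₁ V₂) (h23 : Disjoint V₂ V₃)
    (hC₂ : C₂ ⊆ V₂) (K : Finset (Sym2 α)) (ρ : α) :
    (∑ f : {v // v ∈ C₁} → {w // w ∈ V₂},
      ∑ g : {v // v ∈ C₂ ∪ FfD C₁ star₂ f} → {w // w ∈ V₃},
        Finsupp.single (K ∪ NEmixD C₁ star₂ f ∪ newEdges (C₂ ∪ FfD C₁ star₂ f) V₃ g, ρ) (1:ℚ))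
    = ∑ g₀ : {v // v ∈ C₂} → {w // w ∈ V₃},
      ∑ f' : {v // v ∈ C₁} → {w // w ∈ V₂.erase star₂ ∪ V₃},
        Finsupp.single (K ∪ newEdges C₂ V₃ g₀ ∪ newEdges C₁ (V₂.erase star₂ ∪ V₃) f', ρ) 1 := by
  classical
  have hC₁C₂ : ∀ v : {v // v ∈ C₁}, v.1 ∉ C₂ :=
    fun v hc => Finset.disjoint_left.mp h1V2 v.2 (hC₂ hc)
  have hs23 : star₂ ∉ V₃ := Finset.disjoint_left.mp h23 hstar₂
  set PT := ({v // v ∈ C₁} → {w // w ∈ V₃}) × ({v // v ∈ C₂} → {w // w ∈ V₃}) with hPT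
  set PP : ({v // v ∈ C₁} → {w // w ∈ V₂}) → PT → Prop :=
    fun f p => ∀ v, (f v).1 ≠ star₂ → p.1 v = ⟨d₃, hd₃⟩ with hPP
  have key : ∀ f : {v // v ∈ C₁} → {w // w ∈ V₂},
      (∑ g : {v // v ∈ C₂ ∪ FfD C₁ star₂ f} → {w // w ∈ V₃},
        Finsupp.single (K ∪ NEmixD C₁ star₂ f ∪ newEdges (C₂ ∪ FfD C₁ star₂ f) V₃ g, ρ) (1:ℚ))
      = ∑ p ∈ Finset.univ.filter (PP f),
          Finsupp.single
            (K ∪ NEmixD C₁ star₂ f ∪ (NE2D C₁ star₂ f p.1 ∪ newEdges C₂ V₃ p.2), ρ) (1:ℚ) := by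
    intro f
    have hFfC₁ : FfD C₁ star₂ f ⊆ C₁ := Finset.filter_subset _ _
    refine Finset.sum_bij'
      (i := fun g _ =>
        ((fun v => if h : (f v).1 = star₂ then
            g ⟨v.1, Finset.mem_union_right _ (mem_FfD h)⟩ else ⟨d₃, hd₃⟩,
          fun w => g ⟨w.1, Finset.mem_union_left _ w.2⟩) : PT))
      (j := fun p _ => fun x => if h : x.1 ∈ C₂ then p.2 ⟨x.1, h⟩
        else p.1 ⟨x.1, hFfC₁ ((Finset.mem_union.mp x.2).resolve_left h)⟩)
      ?_ ?_ ?_ ?_ ?_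
    · intro g _
      refine Finset.mem_filter.mpr ⟨Finset.mem_univ _, fun v hne => ?_⟩
      exact dif_neg hne
    · intro p _; exact Finset.mem_univ _
    · intro g _
      funext x
      dsimp only
      by_cases hx : x.1 ∈ C₂
      · rw [dif_pos hx]
      · rw [dif_neg hx]
        have hFf : x.1 ∈ FfD C₁ star₂ f := (Finset.mem_union.mp x.2).resolve_left hx
        have h2 : (f ⟨x.1, hFfC₁ hFf⟩).1 = star₂ := of_mem_FfD hFf
        rw [dif_pos h2]
    · intro p hp
      have hp' := (Finset.mem_filter.mp hp).2
      refine Prod.ext ?_ ?_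
      · funext v
        dsimp only
        by_cases h : (f v).1 = star₂
        · rw [dif_pos h, dif_neg (hC₁C₂ v)]
        · rw [dif_neg h]
          exact (hp' v h).symm
      · funext w
        dsimp only
        rw [dif_pos w.2]
    · intro g _
      congr 2
      have hsplit : newEdges (C₂ ∪ FfD C₁ star₂ f) V₃ g
          = NE2D C₁ star₂ f (fun v => if h : (f v).1 = star₂ then
              g ⟨v.1, Finset.mem_union_right _ (mem_FfD h)⟩ else ⟨d₃, hd₃⟩)
            ∪ newEdges C₂ V₃ (fun w => g ⟨w.1, Finset.mem_union_left _ w.2⟩) := by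
        ext e
        simp only [NE2D, mem_newEdges, Finset.mem_union, Finset.mem_image, Finset.mem_filter,
          Finset.mem_attach, true_and]
        constructor
        · rintro ⟨x, hx⟩
          by_cases hc : x.1 ∈ C₂
          · exact Or.inr ⟨⟨x.1, hc⟩, hx⟩
          · have hFf : x.1 ∈ FfD C₁ star₂ f := (Finset.mem_union.mp x.2).resolve_left hc
            have hmem : x.1 ∈ C₁ := hFfC₁ hFf
            have h2 : (f ⟨x.1, hmem⟩).1 = star₂ := of_mem_FfD hFf
            refine Or.inl ⟨⟨x.1, hmem⟩, h2, ?_⟩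
            rw [dif_pos h2]
            exact hx
        · rintro (⟨v, h2, he⟩ | ⟨w, he⟩)
          · rw [dif_pos h2] at he
            exact ⟨⟨v.1, Finset.mem_union_right _ (mem_FfD h2)⟩, he⟩
          · exact ⟨⟨w.1, Finset.mem_union_left _ w.2⟩, he⟩
      rw [hsplit, Finset.union_assoc]
  calc
    (∑ f : {v // v ∈ C₁} → {w // w ∈ V₂},
      ∑ g : {v // v ∈ C₂ ∪ FfD C₁ star₂ f} → {w // w ∈ V₃},
        Finsupp.single (K ∪ NEmixD C₁ star₂ f ∪ newEdges (C₂ ∪ FfD C₁ star₂ f) V₃ g, ρ) (1:ℚ))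
      = ∑ f : {v // v ∈ C₁} → {w // w ∈ V₂}, ∑ p : PT,
          if PP f p then Finsupp.single
            (K ∪ NEmixD C₁ star₂ f ∪ (NE2D C₁ star₂ f p.1 ∪ newEdges C₂ V₃ p.2), ρ) (1:ℚ)
          else 0 := by
        refine Finset.sum_congr rfl fun f _ => ?_
        rw [key f, Finset.sum_filter]
    _ = ∑ q : ({v // v ∈ C₁} → {w // w ∈ V₂}) × PT,
          if PP q.1 q.2 then Finsupp.single
            (K ∪ NEmixD C₁ star₂ q.1 ∪ (NE2D C₁ star₂ q.1 q.2.1 ∪ newEdges C₂ V₃ q.2.2), ρ) (1:ℚ)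
          else 0 := by
        rw [Fintype.sum_prod_type]
    _ = ∑ q ∈ Finset.univ.filter (fun q : ({v // v ∈ C₁} → {w // w ∈ V₂}) × PT => PP q.1 q.2),
          Finsupp.single
            (K ∪ NEmixD C₁ star₂ q.1 ∪ (NE2D C₁ star₂ q.1 q.2.1 ∪ newEdges C₂ V₃ q.2.2), ρ) (1:ℚ) := by
        rw [Finset.sum_filter]
    _ = ∑ q' : ({v // v ∈ C₂} → {w // w ∈ V₃}) ×
          ({v // v ∈ C₁} → {w // w ∈ V₂.erase star₂ ∪ V₃}),
          Finsupp.single (K ∪ newEdges C₂ V₃ q'.1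
            ∪ newEdges C₁ (V₂.erase star₂ ∪ V₃) q'.2, ρ) (1:ℚ) := by
        refine Finset.sum_bij'
          (i := fun q _ => (q.2.2, fun v =>
            if h : (q.1 v).1 = star₂ then
              ⟨(q.2.1 v).1, Finset.mem_union_right _ (q.2.1 v).2⟩
            else ⟨(q.1 v).1, Finset.mem_union_left _ (Finset.mem_erase.mpr ⟨h, (q.1 v).2⟩)⟩))
          (j := fun q' _ =>
            ((fun v => if h : (q'.2 v).1 ∈ V₃ then ⟨star₂, hstar₂⟩
              else ⟨(q'.2 v).1,
                Finset.mem_of_mem_erase (((Finset.mem_union.mp (q'.2 v).2).resolve_right h))⟩),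
             ((fun v => if h : (q'.2 v).1 ∈ V₃ then ⟨(q'.2 v).1, h⟩ else ⟨d₃, hd₃⟩), q'.1)))
          ?_ ?_ ?_ ?_ ?_
        · intro q _; exact Finset.mem_univ _
        · intro q' _
          refine Finset.mem_filter.mpr ⟨Finset.mem_univ _, fun v hne => ?_⟩
          dsimp only at hne ⊢
          by_cases h : (q'.2 v).1 ∈ V₃
          · exact absurd (by rw [dif_pos h]) hne
          · exact dif_neg h
        · intro q hq
          have hq' := (Finset.mem_filter.mp hq).2
          refine Prod.ext ?_ (Prod.ext ?_ rfl)
          · funext v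
            dsimp only
            by_cases h : (q.1 v).1 = star₂
            · simp only [dif_pos h, dif_pos (q.2.1 v).2]
              exact Subtype.ext h.symm
            · simp only [dif_neg h, dif_neg (fun hc => Finset.disjoint_left.mp h23 (q.1 v).2 hc), Subtype.coe_eta]
          · funext v
            dsimp only
            by_cases h : (q.1 v).1 = star₂
            · simp only [dif_pos h, dif_pos (q.2.1 v).2, Subtype.coe_eta]
            · simp only [dif_neg h, dif_neg (fun hc => Finset.disjoint_left.mp h23 (q.1 v).2 hc)]
              exact (hq' v h).symm
        · intro q' _
          refine Prod.ext rfl ?_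
          funext v
          dsimp only
          by_cases h : (q'.2 v).1 ∈ V₃
          · simp only [dif_pos h]
            have : ((⟨star₂, hstar₂⟩ : {w // w ∈ V₂})).1 = star₂ := rfl
            simp only [dif_pos this, dif_pos h, Subtype.coe_eta, dite_true]
          · simp only [dif_neg h]
            have hmem := Finset.mem_of_mem_erase
              (((Finset.mem_union.mp (q'.2 v).2).resolve_right h))
            have hne : (q'.2 v).1 ≠ star₂ :=
              (Finset.mem_erase.mp (((Finset.mem_union.mp (q'.2 v).2).resolve_right h))).1
            simp only [dif_neg hne, Subtype.coe_eta]
        · intro q hq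
          congr 2
          have hNE : NEmixD C₁ star₂ q.1 ∪ NE2D C₁ star₂ q.1 q.2.1
              = newEdges C₁ (V₂.erase star₂ ∪ V₃) (fun v =>
                if h : (q.1 v).1 = star₂ then
                  ⟨(q.2.1 v).1, Finset.mem_union_right _ (q.2.1 v).2⟩
                else ⟨(q.1 v).1,
                  Finset.mem_union_left _ (Finset.mem_erase.mpr ⟨h, (q.1 v).2⟩)⟩) := by
            ext e
            simp only [NEmixD, NE2D, mem_newEdges, Finset.mem_union, Finset.mem_image,
              Finset.mem_filter, Finset.mem_attach, true_and]
            constructor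
            · rintro (⟨v, hne, he⟩ | ⟨v, heq, he⟩)
              · exact ⟨v, by rw [dif_neg hne]; exact he⟩
              · exact ⟨v, by rw [dif_pos heq]; exact he⟩
            · rintro ⟨v, he⟩
              by_cases h : (q.1 v).1 = star₂
              · rw [dif_pos h] at he
                exact Or.inr ⟨v, h, he⟩
              · rw [dif_neg h] at he
                exact Or.inl ⟨v, h, he⟩
          rw [← hNE]
          ext e
          simp only [Finset.mem_union]
          tauto
    _ = ∑ g₀ : {v // v ∈ C₂} → {w // w ∈ V₃},
      ∑ f' : {v // v ∈ C₁} → {w // w ∈ V₂.erase star₂ ∪ V₃},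
        Finsupp.single (K ∪ newEdges C₂ V₃ g₀ ∪ newEdges C₁ (V₂.erase star₂ ∪ V₃) f', ρ) 1 := by
        rw [Fintype.sum_prod_type]

end Sumeq

section Helpers
variable {α : Type*} [DecidableEq α]

lemma rinsM_single_single (V : Finset α) (star : α) (a b : Finset (Sym2 α) × α) :
    rinsM V star (Finsupp.single a 1) (Finsupp.single b 1) = rins V star a b := by
  rw [rinsM_left_eq, Finsupp.sum_single_index (by simp)]
  simp

lemma nbrs_newEdges' {C V : Finset α} {f : {v // v ∈ C} → {w // w ∈ V}} {star : α}
    (h : star ∉ C) : nbrs (newEdges C V f) star = FfD C star f :=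
  nbrs_newEdges h

lemma delG_newEdges' {C V : Finset α} {f : {v // v ∈ C} → {w // w ∈ V}} {star : α}
    (h : star ∉ C) : delG (newEdges C V f) star = NEmixD C star f :=
  delG_newEdges h

lemma image_filter_dite {C₁ V₂ : Finset α} (star₂ d : α)
    (f : {v // v ∈ C₁} → {w // w ∈ V₂}) :
    ((C₁.filter fun v => (if h : v ∈ C₁ then (f ⟨v, h⟩).1 else d) ≠ star₂).image
      fun v => s(v, if h : v ∈ C₁ then (f ⟨v, h⟩).1 else d)) = NEmixD C₁ star₂ f := by
  ext e
  simp only [NEmixD, Finset.mem_image, Finset.mem_filter, Finset.mem_attach, true_and]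
  constructor
  · rintro ⟨v, ⟨hv, hne⟩, he⟩
    rw [dif_pos hv] at hne he
    exact ⟨⟨v, hv⟩, hne, he⟩
  · rintro ⟨v, hne, he⟩
    refine ⟨v.1, ⟨v.2, ?_⟩, ?_⟩
    · rw [dif_pos v.2]; exact hne
    · rw [dif_pos v.2]; exact he

lemma FfD_subset {C V : Finset α} {star : α} (f : {v // v ∈ C} → {w // w ∈ V}) :
    FfD C star f ⊆ C := Finset.filter_subset _ _

end Helpers

section Tow
variable {α : Type*} [DecidableEq α]

lemma tow1 {V₁ V₂ : Finset α} {t₁ t₂ : Finset (Sym2 α)} {star₁ star₂ r₁ r₂ p q : α}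
    (ht₁ : IsTreeOn V₁ t₁) (ht₂ : IsTreeOn V₂ t₂)
    (hstar₁ : star₁ ∈ V₁) (hstar₂ : star₂ ∈ V₂) (hr₁ : r₁ ∈ V₁) (hr₂ : r₂ ∈ V₂)
    (h12 : Disjoint V₁ V₂) (h2 : star₂ ≠ r₂)
    (hpe : s(star₁, p) ∈ t₁) (hp : towards t₁ star₁ r₁ = {p})
    (hqe : s(star₂, q) ∈ t₂) (hq : towards t₂ star₂ r₂ = {q})
    (f : {v // v ∈ nbrs t₁ star₁ \ {p}} → {w // w ∈ V₂}) :
    delG (delG t₁ star₁ ∪ t₂ ∪ newEdges (nbrs t₁ star₁ \ {p}) V₂ f ∪ {s(p, r₂)}) star₂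
        = delG t₁ star₁ ∪ delG t₂ star₂ ∪ NEmixD (nbrs t₁ star₁ \ {p}) star₂ f ∪ {s(p, r₂)}
    ∧ nbrs (delG t₁ star₁ ∪ t₂ ∪ newEdges (nbrs t₁ star₁ \ {p}) V₂ f ∪ {s(p, r₂)}) star₂
        = nbrs t₂ star₂ ∪ FfD (nbrs t₁ star₁ \ {p}) star₂ f
    ∧ towards (delG t₁ star₁ ∪ t₂ ∪ newEdges (nbrs t₁ star₁ \ {p}) V₂ f ∪ {s(p, r₂)}) star₂ r₁
        = {q} := by
  classical
  have hgr₁ := ht₁.1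
  have hgr₂ := ht₂.1
  have hs₂V₁ : star₂ ∉ V₁ := fun h => Finset.disjoint_left.mp h12 h hstar₂
  have hr₁V₂ : r₁ ∉ V₂ := fun h => Finset.disjoint_left.mp h12 hr₁ h
  have hpV₁ : p ∈ V₁ := graphOn_vert hgr₁ hpe (by simp)
  have hqV₂ : q ∈ V₂ := graphOn_vert hgr₂ hqe (by simp)
  have hpN₁ : p ∈ nbrs t₁ star₁ := mem_nbrs.mpr hpe
  have hqN₂ : q ∈ nbrs t₂ star₂ := mem_nbrs.mpr hqe
  have hN₁V₁ : nbrs t₁ star₁ ⊆ V₁ := nbrs_subset_of_graphOn hgr₁ _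
  have hC₁N₁ : nbrs t₁ star₁ \ {p} ⊆ nbrs t₁ star₁ := Finset.sdiff_subset
  have hs₂C₁ : star₂ ∉ nbrs t₁ star₁ \ {p} := fun h => hs₂V₁ (hN₁V₁ (hC₁N₁ h))
  have hpC₁ : p ∉ nbrs t₁ star₁ \ {p} := by simp
  have ht₁star₂ : ∀ e ∈ t₁, star₂ ∉ e := not_mem_edge_of_graphOn hgr₁ hs₂V₁
  have hAstar₂ : ∀ e ∈ delG t₁ star₁, star₂ ∉ e := fun e he => ht₁star₂ e (delG_subset _ _ he)
  have hXstar₂ : ∀ e ∈ ({s(p, r₂)} : Finset (Sym2 α)), star₂ ∉ e := by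
    intro e he
    rw [Finset.mem_singleton] at he
    subst he
    simp only [Sym2.mem_iff, not_or]
    exact ⟨fun hh => hs₂V₁ (hh ▸ hpV₁), h2⟩
  have hdel : delG (delG t₁ star₁ ∪ t₂ ∪ newEdges (nbrs t₁ star₁ \ {p}) V₂ f ∪ {s(p, r₂)}) star₂
      = delG t₁ star₁ ∪ delG t₂ star₂ ∪ NEmixD (nbrs t₁ star₁ \ {p}) star₂ f ∪ {s(p, r₂)} := by
    rw [delG_union, delG_union, delG_union, delG_eq_self hAstar₂, delG_newEdges' hs₂C₁,
      delG_eq_self hXstar₂]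
  have hnb : nbrs (delG t₁ star₁ ∪ t₂ ∪ newEdges (nbrs t₁ star₁ \ {p}) V₂ f ∪ {s(p, r₂)}) star₂
      = nbrs t₂ star₂ ∪ FfD (nbrs t₁ star₁ \ {p}) star₂ f := by
    rw [nbrs_union, nbrs_union, nbrs_union, nbrs_eq_empty hAstar₂, nbrs_newEdges' hs₂C₁,
      nbrs_eq_empty hXstar₂]
    simp
  refine ⟨hdel, hnb, ?_⟩
  -- the SEP decomposition
  set φ : α → α := fun u =>
    if h : u ∈ nbrs t₁ star₁ \ {p} then (f ⟨u, h⟩).1 else r₂ with hφ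
  set D : Finset α := ((nbrs t₁ star₁ \ {p}).filter fun v => φ v ≠ star₂) ∪ {p} with hD
  have hφp : φ p = r₂ := dif_neg hpC₁
  have himg : D.image (fun u => s(u, φ u))
      = NEmixD (nbrs t₁ star₁ \ {p}) star₂ f ∪ {s(p, r₂)} := by
    rw [hD, Finset.image_union, Finset.image_singleton]
    congr 1
    · exact image_filter_dite star₂ r₂ f
    · rw [hφp]
  have hdelSEP : delG (delG t₁ star₁ ∪ t₂ ∪ newEdges (nbrs t₁ star₁ \ {p}) V₂ f ∪ {s(p, r₂)}) star₂
      = delG t₁ star₁ ∪ delG t₂ star₂ ∪ D.image (fun u => s(u, φ u)) := by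
    rw [hdel, himg, Finset.union_assoc (delG t₁ star₁ ∪ delG t₂ star₂)]
  have hDN₁ : D ⊆ nbrs t₁ star₁ := by
    intro u hu
    rcases Finset.mem_union.mp hu with h | h
    · exact hC₁N₁ (Finset.mem_filter.mp h).1
    · rw [Finset.mem_singleton.mp h]; exact hpN₁
  have hDhyp : ∀ u ∈ D, u ∈ V₁ ∧ φ u ∈ V₂.erase star₂ := by
    intro u hu
    refine ⟨hN₁V₁ (hDN₁ hu), ?_⟩
    rcases Finset.mem_union.mp hu with h | h
    · obtain ⟨h1, h2'⟩ := Finset.mem_filter.mp h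
      refine Finset.mem_erase.mpr ⟨h2', ?_⟩
      rw [hφ]; dsimp only; rw [dif_pos h1]
      exact (f ⟨u, h1⟩).2
    · rw [Finset.mem_singleton.mp h, hφp]
      exact Finset.mem_erase.mpr ⟨fun hh => h2 hh.symm, hr₂⟩
  have huniq : ∀ u ∈ D, ∀ u' ∈ D, (toSG (delG t₁ star₁)).Reachable u u' → u = u' := by
    intro u hu u' hu' hr
    exact unique_nbr_reach ht₁.2.2 (mem_nbrs.mp (hDN₁ hu)) (mem_nbrs.mp (hDN₁ hu'))
      (nbrs_ne_self hgr₁ (hDN₁ hu)) (nbrs_ne_self hgr₁ (hDN₁ hu')) hr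
      (SimpleGraph.Reachable.refl _)
  have hAe : ∀ e ∈ delG t₁ star₁, ∀ v ∈ e, v ∈ V₁ :=
    fun e he => (hgr₁ e (delG_subset _ _ he)).2
  have hBe : ∀ e ∈ delG t₂ star₂, ∀ v ∈ e, v ∈ V₂.erase star₂ := by
    intro e he v hv
    exact Finset.mem_erase.mpr ⟨fun hh => (mem_delG.mp he).2 (hh ▸ hv),
      (hgr₂ e (mem_delG.mp he).1).2 v hv⟩
  have hdisjAB : Disjoint V₁ (V₂.erase star₂) := h12.mono_right (Finset.erase_subset _ _)
  have hreachp : (toSG (delG t₁ star₁)).Reachable p r₁ := by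
    have : p ∈ towards t₁ star₁ r₁ := hp ▸ Finset.mem_singleton_self p
    exact (Finset.mem_filter.mp this).2
  have hreachq : (toSG (delG t₂ star₂)).Reachable q r₂ := by
    have : q ∈ towards t₂ star₂ r₂ := hq ▸ Finset.mem_singleton_self q
    exact (Finset.mem_filter.mp this).2
  have hupiff : ∀ u' ∈ D, (toSG (delG t₁ star₁)).Reachable u' r₁ → u' = p := by
    intro u' hu' hr
    exact unique_nbr_reach ht₁.2.2 (mem_nbrs.mp (hDN₁ hu')) hpe
      (nbrs_ne_self hgr₁ (hDN₁ hu')) (fun hh => (hgr₁ _ hpe).1 (by rw [hh]; simp [Sym2.mk_isDiag_iff])) hr hreachp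
  have hpD : p ∈ D := Finset.mem_union_right _ (Finset.mem_singleton_self p)
  -- now compute towards
  rw [towards, hnb, hdelSEP]
  ext v
  simp only [Finset.mem_filter, Finset.mem_singleton, Finset.mem_union]
  constructor
  · rintro ⟨hv, hreach⟩
    obtain ⟨w⟩ := hreach
    have S := sep_walk hAe hBe hdisjAB hDhyp huniq w
    rcases hv with hvN₂ | hvFf
    · have hvVB : v ∈ V₂.erase star₂ :=
        Finset.mem_erase.mpr ⟨nbrs_ne_self hgr₂ hvN₂, nbrs_subset_of_graphOn hgr₂ _ hvN₂⟩
      obtain ⟨u', hu', rB, rA⟩ := S.2.2.1 hvVB hr₁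
      have hup : u' = p := hupiff u' hu' rA
      have hrBq : (toSG (delG t₂ star₂)).Reachable v r₂ := by
        rw [hup, hφp] at rB; exact rB
      have : v ∈ towards t₂ star₂ r₂ := Finset.mem_filter.mpr ⟨hvN₂, hrBq⟩
      rw [hq, Finset.mem_singleton] at this
      exact this
    · exfalso
      have hvC₁ : v ∈ nbrs t₁ star₁ \ {p} := FfD_subset f hvFf
      have hvV₁ : v ∈ V₁ := hN₁V₁ (hC₁N₁ hvC₁)
      have hφv : φ v = star₂ := by
        rw [hφ]; dsimp only; rw [dif_pos hvC₁]
        exact of_mem_FfD hvFf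
      rcases S.1 hvV₁ hr₁ with hvr | ⟨u, hu, u', hu', rA1, _, _⟩
      · -- v reaches r₁ in A, so v = p, contradiction
        have : v = p := unique_nbr_reach ht₁.2.2 (mem_nbrs.mp (hC₁N₁ hvC₁)) hpe
          (nbrs_ne_self hgr₁ (hC₁N₁ hvC₁))
          (fun hh => (hgr₁ _ hpe).1 (by rw [hh]; simp [Sym2.mk_isDiag_iff])) hvr hreachp
        exact (Finset.mem_sdiff.mp hvC₁).2 (Finset.mem_singleton.mpr this)
      · -- v reaches u ∈ D in A, so v = u, contradiction with φ v = star₂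
        have hvu : v = u := unique_nbr_reach ht₁.2.2 (mem_nbrs.mp (hC₁N₁ hvC₁))
          (mem_nbrs.mp (hDN₁ hu)) (nbrs_ne_self hgr₁ (hC₁N₁ hvC₁))
          (nbrs_ne_self hgr₁ (hDN₁ hu)) rA1 (SimpleGraph.Reachable.refl _)
        rcases Finset.mem_union.mp hu with h | h
        · exact (Finset.mem_filter.mp h).2 (hvu ▸ hφv)
        · exact (Finset.mem_sdiff.mp hvC₁).2 (Finset.mem_singleton.mpr
            (hvu.trans (Finset.mem_singleton.mp h)))
  · rintro rfl
    refine ⟨Or.inl hqN₂, ?_⟩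
    have hmono2 : toSG (delG t₂ star₂)
        ≤ toSG (delG t₁ star₁ ∪ delG t₂ star₂ ∪ D.image fun u => s(u, φ u)) :=
      toSG_mono (fun e he => Finset.mem_union_left _ (Finset.mem_union_right _ he))
    have hmono1 : toSG (delG t₁ star₁)
        ≤ toSG (delG t₁ star₁ ∪ delG t₂ star₂ ∪ D.image fun u => s(u, φ u)) :=
      toSG_mono (fun e he => Finset.mem_union_left _ (Finset.mem_union_left _ he))
    have hadj : (toSG (delG t₁ star₁ ∪ delG t₂ star₂ ∪ D.image fun u => s(u, φ u))).Adj r₂ p := by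
      refine ⟨fun hh => hs₂V₁ ((hh ▸ hpV₁ : r₂ ∈ V₁) |> fun hx => absurd hx (fun _ => by
        exact absurd (hh ▸ hpV₁) (fun h' => Finset.disjoint_left.mp h12 h' hr₂))), ?_⟩
      · rw [Sym2.eq_swap]
        refine Finset.mem_union_right _ (Finset.mem_image.mpr ⟨p, hpD, ?_⟩)
        rw [hφp]
    exact ((hreachq.mono hmono2).trans hadj.reachable).trans (hreachp.mono hmono1)

end Tow

section Tow2
variable {α : Type*} [DecidableEq α]

lemma tow2 {V₁ V₂ : Finset α} {t₁ t₂ : Finset (Sym2 α)} {star₁ star₂ r₁ r₂ p : α}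
    (ht₁ : IsTreeOn V₁ t₁) (ht₂ : IsTreeOn V₂ t₂)
    (hstar₁ : star₁ ∈ V₁) (hstar₂ : star₂ ∈ V₂) (hr₁ : r₁ ∈ V₁) (hr₂ : r₂ ∈ V₂)
    (h12 : Disjoint V₁ V₂) (h2 : star₂ = r₂)
    (hpe : s(star₁, p) ∈ t₁) (hp : towards t₁ star₁ r₁ = {p})
    (f : {v // v ∈ nbrs t₁ star₁ \ {p}} → {w // w ∈ V₂}) :
    delG (delG t₁ star₁ ∪ t₂ ∪ newEdges (nbrs t₁ star₁ \ {p}) V₂ f ∪ {s(p, r₂)}) star₂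
        = delG t₁ star₁ ∪ delG t₂ star₂ ∪ NEmixD (nbrs t₁ star₁ \ {p}) star₂ f
    ∧ nbrs (delG t₁ star₁ ∪ t₂ ∪ newEdges (nbrs t₁ star₁ \ {p}) V₂ f ∪ {s(p, r₂)}) star₂
        = nbrs t₂ star₂ ∪ FfD (nbrs t₁ star₁ \ {p}) star₂ f ∪ {p}
    ∧ towards (delG t₁ star₁ ∪ t₂ ∪ newEdges (nbrs t₁ star₁ \ {p}) V₂ f ∪ {s(p, r₂)}) star₂ r₁
        = {p} := by
  classical
  have hgr₁ := ht₁.1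
  have hgr₂ := ht₂.1
  have hs₂V₁ : star₂ ∉ V₁ := fun h => Finset.disjoint_left.mp h12 h hstar₂
  have hpV₁ : p ∈ V₁ := graphOn_vert hgr₁ hpe (by simp)
  have hpN₁ : p ∈ nbrs t₁ star₁ := mem_nbrs.mpr hpe
  have hN₁V₁ : nbrs t₁ star₁ ⊆ V₁ := nbrs_subset_of_graphOn hgr₁ _
  have hC₁N₁ : nbrs t₁ star₁ \ {p} ⊆ nbrs t₁ star₁ := Finset.sdiff_subset
  have hs₂C₁ : star₂ ∉ nbrs t₁ star₁ \ {p} := fun h => hs₂V₁ (hN₁V₁ (hC₁N₁ h))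
  have hpC₁ : p ∉ nbrs t₁ star₁ \ {p} := by simp
  have hps₂ : star₂ ≠ p := fun hh => hs₂V₁ (hh ▸ hpV₁)
  have ht₁star₂ : ∀ e ∈ t₁, star₂ ∉ e := not_mem_edge_of_graphOn hgr₁ hs₂V₁
  have hAstar₂ : ∀ e ∈ delG t₁ star₁, star₂ ∉ e := fun e he => ht₁star₂ e (delG_subset _ _ he)
  have hdelX : delG ({s(p, r₂)} : Finset (Sym2 α)) star₂ = ∅ := by
    ext e
    simp only [mem_delG, Finset.mem_singleton, Finset.notMem_empty, iff_false, not_and]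
    rintro rfl
    simp [h2]
  have hnbX : nbrs ({s(p, r₂)} : Finset (Sym2 α)) star₂ = {p} := by
    ext v
    simp only [mem_nbrs, Finset.mem_singleton, Sym2.eq_iff]
    constructor
    · rintro (⟨h1, _⟩ | ⟨_, h4⟩)
      · exact absurd h1 hps₂
      · exact h4
    · rintro rfl
      exact Or.inr ⟨h2, rfl⟩
  have hdel : delG (delG t₁ star₁ ∪ t₂ ∪ newEdges (nbrs t₁ star₁ \ {p}) V₂ f ∪ {s(p, r₂)}) star₂
      = delG t₁ star₁ ∪ delG t₂ star₂ ∪ NEmixD (nbrs t₁ star₁ \ {p}) star₂ f := by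
    rw [delG_union, delG_union, delG_union, delG_eq_self hAstar₂, delG_newEdges' hs₂C₁, hdelX,
      Finset.union_empty]
  have hnb : nbrs (delG t₁ star₁ ∪ t₂ ∪ newEdges (nbrs t₁ star₁ \ {p}) V₂ f ∪ {s(p, r₂)}) star₂
      = nbrs t₂ star₂ ∪ FfD (nbrs t₁ star₁ \ {p}) star₂ f ∪ {p} := by
    rw [nbrs_union, nbrs_union, nbrs_union, nbrs_eq_empty hAstar₂, nbrs_newEdges' hs₂C₁, hnbX]
    simp
  refine ⟨hdel, hnb, ?_⟩
  set φ : α → α := fun u =>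
    if h : u ∈ nbrs t₁ star₁ \ {p} then (f ⟨u, h⟩).1 else r₂ with hφ
  set D : Finset α := (nbrs t₁ star₁ \ {p}).filter (fun v => φ v ≠ star₂) with hD
  have himg : D.image (fun u => s(u, φ u))
      = NEmixD (nbrs t₁ star₁ \ {p}) star₂ f := image_filter_dite star₂ r₂ f
  have hdelSEP : delG (delG t₁ star₁ ∪ t₂ ∪ newEdges (nbrs t₁ star₁ \ {p}) V₂ f ∪ {s(p, r₂)}) star₂
      = delG t₁ star₁ ∪ delG t₂ star₂ ∪ D.image (fun u => s(u, φ u)) := by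
    rw [hdel, himg]
  have hDN₁ : D ⊆ nbrs t₁ star₁ := fun u hu => hC₁N₁ (Finset.mem_filter.mp hu).1
  have hDhyp : ∀ u ∈ D, u ∈ V₁ ∧ φ u ∈ V₂.erase star₂ := by
    intro u hu
    obtain ⟨h1, h2'⟩ := Finset.mem_filter.mp hu
    refine ⟨hN₁V₁ (hC₁N₁ h1), Finset.mem_erase.mpr ⟨h2', ?_⟩⟩
    rw [hφ]; dsimp only; rw [dif_pos h1]
    exact (f ⟨u, h1⟩).2
  have huniq : ∀ u ∈ D, ∀ u' ∈ D, (toSG (delG t₁ star₁)).Reachable u u' → u = u' := by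
    intro u hu u' hu' hr
    exact unique_nbr_reach ht₁.2.2 (mem_nbrs.mp (hDN₁ hu)) (mem_nbrs.mp (hDN₁ hu'))
      (nbrs_ne_self hgr₁ (hDN₁ hu)) (nbrs_ne_self hgr₁ (hDN₁ hu')) hr
      (SimpleGraph.Reachable.refl _)
  have hAe : ∀ e ∈ delG t₁ star₁, ∀ v ∈ e, v ∈ V₁ :=
    fun e he => (hgr₁ e (delG_subset _ _ he)).2
  have hBe : ∀ e ∈ delG t₂ star₂, ∀ v ∈ e, v ∈ V₂.erase star₂ := by
    intro e he v hv
    exact Finset.mem_erase.mpr ⟨fun hh => (mem_delG.mp he).2 (hh ▸ hv),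
      (hgr₂ e (mem_delG.mp he).1).2 v hv⟩
  have hdisjAB : Disjoint V₁ (V₂.erase star₂) := h12.mono_right (Finset.erase_subset _ _)
  have hreachp : (toSG (delG t₁ star₁)).Reachable p r₁ := by
    have : p ∈ towards t₁ star₁ r₁ := hp ▸ Finset.mem_singleton_self p
    exact (Finset.mem_filter.mp this).2
  have hpstar₁ : p ≠ star₁ := nbrs_ne_self hgr₁ hpN₁
  rw [towards, hnb, hdelSEP]
  ext v
  simp only [Finset.mem_filter, Finset.mem_singleton, Finset.mem_union]
  constructor
  · rintro ⟨hv, hreach⟩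
    obtain ⟨w⟩ := hreach
    have S := sep_walk hAe hBe hdisjAB hDhyp huniq w
    rcases hv with (hvN₂ | hvFf) | hvp
    · exfalso
      have hvVB : v ∈ V₂.erase star₂ :=
        Finset.mem_erase.mpr ⟨nbrs_ne_self hgr₂ hvN₂, nbrs_subset_of_graphOn hgr₂ _ hvN₂⟩
      obtain ⟨u', hu', _, rA⟩ := S.2.2.1 hvVB hr₁
      have hup : u' = p := unique_nbr_reach ht₁.2.2 (mem_nbrs.mp (hDN₁ hu')) hpe
        (nbrs_ne_self hgr₁ (hDN₁ hu')) hpstar₁ rA hreachp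
      exact (Finset.mem_sdiff.mp (Finset.mem_filter.mp hu').1).2
        (Finset.mem_singleton.mpr hup)
    · exfalso
      have hvC₁ : v ∈ nbrs t₁ star₁ \ {p} := FfD_subset f hvFf
      have hvV₁ : v ∈ V₁ := hN₁V₁ (hC₁N₁ hvC₁)
      have hφv : φ v = star₂ := by
        rw [hφ]; dsimp only; rw [dif_pos hvC₁]
        exact of_mem_FfD hvFf
      rcases S.1 hvV₁ hr₁ with hvr | ⟨u, hu, u', hu', rA1, _, _⟩
      · have : v = p := unique_nbr_reach ht₁.2.2 (mem_nbrs.mp (hC₁N₁ hvC₁)) hpe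
          (nbrs_ne_self hgr₁ (hC₁N₁ hvC₁)) hpstar₁ hvr hreachp
        exact (Finset.mem_sdiff.mp hvC₁).2 (Finset.mem_singleton.mpr this)
      · have hvu : v = u := unique_nbr_reach ht₁.2.2 (mem_nbrs.mp (hC₁N₁ hvC₁))
          (mem_nbrs.mp (hDN₁ hu)) (nbrs_ne_self hgr₁ (hC₁N₁ hvC₁))
          (nbrs_ne_self hgr₁ (hDN₁ hu)) rA1 (SimpleGraph.Reachable.refl _)
        exact (Finset.mem_filter.mp hu).2 (hvu ▸ hφv)
    · exact hvp
  · rintro rfl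
    refine ⟨Or.inr rfl, ?_⟩
    have hmono1 : toSG (delG t₁ star₁)
        ≤ toSG (delG t₁ star₁ ∪ delG t₂ star₂ ∪ D.image fun u => s(u, φ u)) :=
      toSG_mono (fun e he => Finset.mem_union_left _ (Finset.mem_union_left _ he))
    exact hreachp.mono hmono1

lemma tow3 {V₁ V₂ : Finset α} {t₁ t₂ : Finset (Sym2 α)} {star₁ star₂ r₂ q : α}
    (ht₁ : IsTreeOn V₁ t₁) (ht₂ : IsTreeOn V₂ t₂)
    (hstar₁ : star₁ ∈ V₁) (hstar₂ : star₂ ∈ V₂) (hr₂ : r₂ ∈ V₂)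
    (h12 : Disjoint V₁ V₂) (h2 : star₂ ≠ r₂)
    (hqe : s(star₂, q) ∈ t₂) (hq : towards t₂ star₂ r₂ = {q})
    (f : {v // v ∈ nbrs t₁ star₁} → {w // w ∈ V₂}) :
    delG (delG t₁ star₁ ∪ t₂ ∪ newEdges (nbrs t₁ star₁) V₂ f) star₂
        = delG t₁ star₁ ∪ delG t₂ star₂ ∪ NEmixD (nbrs t₁ star₁) star₂ f
    ∧ nbrs (delG t₁ star₁ ∪ t₂ ∪ newEdges (nbrs t₁ star₁) V₂ f) star₂
        = nbrs t₂ star₂ ∪ FfD (nbrs t₁ star₁) star₂ f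
    ∧ towards (delG t₁ star₁ ∪ t₂ ∪ newEdges (nbrs t₁ star₁) V₂ f) star₂ r₂
        = {q} := by
  classical
  have hgr₁ := ht₁.1
  have hgr₂ := ht₂.1
  have hs₂V₁ : star₂ ∉ V₁ := fun h => Finset.disjoint_left.mp h12 h hstar₂
  have hqN₂ : q ∈ nbrs t₂ star₂ := mem_nbrs.mpr hqe
  have hN₁V₁ : nbrs t₁ star₁ ⊆ V₁ := nbrs_subset_of_graphOn hgr₁ _
  have hs₂C₁ : star₂ ∉ nbrs t₁ star₁ := fun h => hs₂V₁ (hN₁V₁ h)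
  have ht₁star₂ : ∀ e ∈ t₁, star₂ ∉ e := not_mem_edge_of_graphOn hgr₁ hs₂V₁
  have hAstar₂ : ∀ e ∈ delG t₁ star₁, star₂ ∉ e := fun e he => ht₁star₂ e (delG_subset _ _ he)
  have hdel : delG (delG t₁ star₁ ∪ t₂ ∪ newEdges (nbrs t₁ star₁) V₂ f) star₂
      = delG t₁ star₁ ∪ delG t₂ star₂ ∪ NEmixD (nbrs t₁ star₁) star₂ f := by
    rw [delG_union, delG_union, delG_eq_self hAstar₂, delG_newEdges' hs₂C₁]
  have hnb : nbrs (delG t₁ star₁ ∪ t₂ ∪ newEdges (nbrs t₁ star₁) V₂ f) star₂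
      = nbrs t₂ star₂ ∪ FfD (nbrs t₁ star₁) star₂ f := by
    rw [nbrs_union, nbrs_union, nbrs_eq_empty hAstar₂, nbrs_newEdges' hs₂C₁]
    simp
  refine ⟨hdel, hnb, ?_⟩
  set φ : α → α := fun u =>
    if h : u ∈ nbrs t₁ star₁ then (f ⟨u, h⟩).1 else r₂ with hφ
  set D : Finset α := (nbrs t₁ star₁).filter (fun v => φ v ≠ star₂) with hD
  have himg : D.image (fun u => s(u, φ u))
      = NEmixD (nbrs t₁ star₁) star₂ f := image_filter_dite star₂ r₂ f
  have hdelSEP : delG (delG t₁ star₁ ∪ t₂ ∪ newEdges (nbrs t₁ star₁) V₂ f) star₂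
      = delG t₁ star₁ ∪ delG t₂ star₂ ∪ D.image (fun u => s(u, φ u)) := by
    rw [hdel, himg]
  have hDN₁ : D ⊆ nbrs t₁ star₁ := fun u hu => (Finset.mem_filter.mp hu).1
  have hDhyp : ∀ u ∈ D, u ∈ V₁ ∧ φ u ∈ V₂.erase star₂ := by
    intro u hu
    obtain ⟨h1, h2'⟩ := Finset.mem_filter.mp hu
    refine ⟨hN₁V₁ h1, Finset.mem_erase.mpr ⟨h2', ?_⟩⟩
    rw [hφ]; dsimp only; rw [dif_pos h1]
    exact (f ⟨u, h1⟩).2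
  have huniq : ∀ u ∈ D, ∀ u' ∈ D, (toSG (delG t₁ star₁)).Reachable u u' → u = u' := by
    intro u hu u' hu' hr
    exact unique_nbr_reach ht₁.2.2 (mem_nbrs.mp (hDN₁ hu)) (mem_nbrs.mp (hDN₁ hu'))
      (nbrs_ne_self hgr₁ (hDN₁ hu)) (nbrs_ne_self hgr₁ (hDN₁ hu')) hr
      (SimpleGraph.Reachable.refl _)
  have hAe : ∀ e ∈ delG t₁ star₁, ∀ v ∈ e, v ∈ V₁ :=
    fun e he => (hgr₁ e (delG_subset _ _ he)).2
  have hBe : ∀ e ∈ delG t₂ star₂, ∀ v ∈ e, v ∈ V₂.erase star₂ := by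
    intro e he v hv
    exact Finset.mem_erase.mpr ⟨fun hh => (mem_delG.mp he).2 (hh ▸ hv),
      (hgr₂ e (mem_delG.mp he).1).2 v hv⟩
  have hdisjAB : Disjoint V₁ (V₂.erase star₂) := h12.mono_right (Finset.erase_subset _ _)
  have hreachq : (toSG (delG t₂ star₂)).Reachable q r₂ := by
    have : q ∈ towards t₂ star₂ r₂ := hq ▸ Finset.mem_singleton_self q
    exact (Finset.mem_filter.mp this).2
  have hr₂VB : r₂ ∈ V₂.erase star₂ := Finset.mem_erase.mpr ⟨fun hh => h2 hh.symm, hr₂⟩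
  rw [towards, hnb, hdelSEP]
  ext v
  simp only [Finset.mem_filter, Finset.mem_singleton, Finset.mem_union]
  constructor
  · rintro ⟨hv, hreach⟩
    obtain ⟨w⟩ := hreach
    have S := sep_walk hAe hBe hdisjAB hDhyp huniq w
    rcases hv with hvN₂ | hvFf
    · have hvVB : v ∈ V₂.erase star₂ :=
        Finset.mem_erase.mpr ⟨nbrs_ne_self hgr₂ hvN₂, nbrs_subset_of_graphOn hgr₂ _ hvN₂⟩
      have hrB : (toSG (delG t₂ star₂)).Reachable v r₂ := S.2.2.2 hvVB hr₂VB
      have : v ∈ towards t₂ star₂ r₂ := Finset.mem_filter.mpr ⟨hvN₂, hrB⟩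
      rw [hq, Finset.mem_singleton] at this
      exact this
    · exfalso
      have hvC₁ : v ∈ nbrs t₁ star₁ := FfD_subset f hvFf
      have hφv : φ v = star₂ := by
        rw [hφ]; dsimp only; rw [dif_pos hvC₁]
        exact of_mem_FfD hvFf
      obtain ⟨u, hu, rA, _⟩ := S.2.1 (hN₁V₁ hvC₁) hr₂VB
      have hvu : v = u := unique_nbr_reach ht₁.2.2 (mem_nbrs.mp hvC₁)
        (mem_nbrs.mp (hDN₁ hu)) (nbrs_ne_self hgr₁ hvC₁)
        (nbrs_ne_self hgr₁ (hDN₁ hu)) rA (SimpleGraph.Reachable.refl _)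
      exact (Finset.mem_filter.mp hu).2 (hvu ▸ hφv)
  · rintro rfl
    refine ⟨Or.inl hqN₂, ?_⟩
    have hmono2 : toSG (delG t₂ star₂)
        ≤ toSG (delG t₁ star₁ ∪ delG t₂ star₂ ∪ D.image fun u => s(u, φ u)) :=
      toSG_mono (fun e he => Finset.mem_union_left _ (Finset.mem_union_right _ he))
    exact hreachq.mono hmono2

end Tow2

section Unions
variable {β : Type*} [DecidableEq β]

lemma unionL1 (a b n x1 t g x2 : Finset β) :
    a ∪ b ∪ n ∪ x1 ∪ t ∪ g ∪ x2 = a ∪ b ∪ x1 ∪ t ∪ x2 ∪ n ∪ g := by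
  ext e; simp only [Finset.mem_union]; tauto

lemma unionR1 (a b t g2 x2 f x1 : Finset β) :
    a ∪ (b ∪ t ∪ g2 ∪ x2) ∪ f ∪ x1 = a ∪ b ∪ x1 ∪ t ∪ x2 ∪ g2 ∪ f := by
  ext e; simp only [Finset.mem_union]; tauto

end Unions
section Unions2
variable {β : Type*} [DecidableEq β]

lemma unionL2 (a b n t g x : Finset β) :
    a ∪ b ∪ n ∪ t ∪ g ∪ x = a ∪ b ∪ t ∪ x ∪ n ∪ g := by
  ext e; simp only [Finset.mem_union]; tauto

lemma unionR2 (a b t g2 f x : Finset β) :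
    a ∪ (b ∪ t ∪ g2) ∪ f ∪ x = a ∪ b ∪ t ∪ x ∪ g2 ∪ f := by
  ext e; simp only [Finset.mem_union]; tauto

lemma unionR3 (a b t g2 x f : Finset β) :
    a ∪ (b ∪ t ∪ g2 ∪ x) ∪ f = a ∪ b ∪ t ∪ x ∪ g2 ∪ f := by
  ext e; simp only [Finset.mem_union]; tauto

lemma unionL4 (a b n t g : Finset β) :
    a ∪ b ∪ n ∪ t ∪ g = a ∪ b ∪ t ∪ n ∪ g := by
  ext e; simp only [Finset.mem_union]; tauto

lemma unionR4 (a b t g2 f : Finset β) :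
    a ∪ (b ∪ t ∪ g2) ∪ f = a ∪ b ∪ t ∪ g2 ∪ f := by
  ext e; simp only [Finset.mem_union]; tauto

end Unions2

section Cases
variable {α : Type*} [DecidableEq α]

lemma delnb4 {V₁ V₂ : Finset α} {t₁ t₂ : Finset (Sym2 α)} {star₁ star₂ : α}
    (ht₁ : IsTreeOn V₁ t₁)
    (hstar₂ : star₂ ∈ V₂) (h12 : Disjoint V₁ V₂)
    (f : {v // v ∈ nbrs t₁ star₁} → {w // w ∈ V₂}) :
    delG (delG t₁ star₁ ∪ t₂ ∪ newEdges (nbrs t₁ star₁) V₂ f) star₂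
        = delG t₁ star₁ ∪ delG t₂ star₂ ∪ NEmixD (nbrs t₁ star₁) star₂ f
    ∧ nbrs (delG t₁ star₁ ∪ t₂ ∪ newEdges (nbrs t₁ star₁) V₂ f) star₂
        = nbrs t₂ star₂ ∪ FfD (nbrs t₁ star₁) star₂ f := by
  have hgr₁ := ht₁.1
  have hs₂V₁ : star₂ ∉ V₁ := fun h => Finset.disjoint_left.mp h12 h hstar₂
  have hN₁V₁ : nbrs t₁ star₁ ⊆ V₁ := nbrs_subset_of_graphOn hgr₁ _
  have hs₂C₁ : star₂ ∉ nbrs t₁ star₁ := fun h => hs₂V₁ (hN₁V₁ h)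
  have hAstar₂ : ∀ e ∈ delG t₁ star₁, star₂ ∉ e :=
    fun e he => not_mem_edge_of_graphOn hgr₁ hs₂V₁ e (delG_subset _ _ he)
  constructor
  · rw [delG_union, delG_union, delG_eq_self hAstar₂, delG_newEdges' hs₂C₁]
  · rw [nbrs_union, nbrs_union, nbrs_eq_empty hAstar₂, nbrs_newEdges' hs₂C₁]
    simp

set_option maxHeartbeats 1000000 in
lemma caseI {V₁ V₂ V₃ : Finset α} {star₁ star₂ : α}
    (h12 : Disjoint V₁ V₂) (h13 : Disjoint V₁ V₃) (h23 : Disjoint V₂ V₃)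
    (hstar₁ : star₁ ∈ V₁) (hstar₂ : star₂ ∈ V₂)
    {t₁ t₂ t₃ : Finset (Sym2 α)} {r₁ r₂ r₃ : α}
    (hr₁ : r₁ ∈ V₁) (hr₂ : r₂ ∈ V₂) (hr₃ : r₃ ∈ V₃)
    (ht₁ : IsTreeOn V₁ t₁) (ht₂ : IsTreeOn V₂ t₂)
    (h1 : star₁ ≠ r₁) (h2 : star₂ ≠ r₂) :
    rinsM V₃ star₂ (rins V₂ star₁ (t₁, r₁) (t₂, r₂)) (Finsupp.single (t₃, r₃) 1)
      = rinsM (V₂.erase star₂ ∪ V₃) star₁ (Finsupp.single (t₁, r₁) 1)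
          (rins V₃ star₂ (t₂, r₂) (t₃, r₃)) := by
  classical
  obtain ⟨p, hpe, hpstar, hp⟩ := towards_eq_singleton ht₁ hstar₁ hr₁ h1
  obtain ⟨q, hqe, hqstar, hq⟩ := towards_eq_singleton ht₂ hstar₂ hr₂ h2
  have hgr₁ := ht₁.1
  have hgr₂ := ht₂.1
  have hs₂r₁ : star₂ ≠ r₁ := fun h => Finset.disjoint_left.mp h12 (h ▸ hr₁) hstar₂
  have hqV₂ : q ∈ V₂ := graphOn_vert hgr₂ hqe (by simp)
  have hC₁V₁ : nbrs t₁ star₁ \ {p} ⊆ V₁ :=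
    fun v hv => nbrs_subset_of_graphOn hgr₁ _ (Finset.sdiff_subset hv)
  have hqFf : ∀ f : {v // v ∈ nbrs t₁ star₁ \ {p}} → {w // w ∈ V₂},
      q ∉ FfD (nbrs t₁ star₁ \ {p}) star₂ f := by
    intro f hh
    exact Finset.disjoint_left.mp h12 (hC₁V₁ (FfD_subset f hh)) hqV₂
  set K : Finset (Sym2 α) :=
    delG t₁ star₁ ∪ delG t₂ star₂ ∪ {s(p, r₂)} ∪ t₃ ∪ {s(q, r₃)} with hK
  have lhs1 : rins V₂ star₁ (t₁, r₁) (t₂, r₂)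
      = ∑ f : {v // v ∈ nbrs t₁ star₁ \ {p}} → {w // w ∈ V₂},
          Finsupp.single
            (delG t₁ star₁ ∪ t₂ ∪ newEdges (nbrs t₁ star₁ \ {p}) V₂ f ∪ {s(p, r₂)}, r₁) 1 := by
    simp only [rins]
    rw [if_neg h1, if_neg h1, if_neg h1, hp, Finset.image_singleton]
  have rhs1 : rins V₃ star₂ (t₂, r₂) (t₃, r₃)
      = ∑ g₀ : {v // v ∈ nbrs t₂ star₂ \ {q}} → {w // w ∈ V₃},
          Finsupp.single
            (delG t₂ star₂ ∪ t₃ ∪ newEdges (nbrs t₂ star₂ \ {q}) V₃ g₀ ∪ {s(q, r₃)}, r₂) 1 := by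
    simp only [rins]
    rw [if_neg h2, if_neg h2, if_neg h2, hq, Finset.image_singleton]
  have main1 : ∀ f : {v // v ∈ nbrs t₁ star₁ \ {p}} → {w // w ∈ V₂},
      rins V₃ star₂
        (delG t₁ star₁ ∪ t₂ ∪ newEdges (nbrs t₁ star₁ \ {p}) V₂ f ∪ {s(p, r₂)}, r₁) (t₃, r₃)
      = ∑ g : {v // v ∈ (nbrs t₂ star₂ \ {q}) ∪ FfD (nbrs t₁ star₁ \ {p}) star₂ f}
            → {w // w ∈ V₃},
          Finsupp.single (K ∪ NEmixD (nbrs t₁ star₁ \ {p}) star₂ f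
            ∪ newEdges ((nbrs t₂ star₂ \ {q}) ∪ FfD (nbrs t₁ star₁ \ {p}) star₂ f) V₃ g, r₁)
            1 := by
    intro f
    obtain ⟨hdel, hnb, htow⟩ :=
      tow1 ht₁ ht₂ hstar₁ hstar₂ hr₁ hr₂ h12 h2 hpe hp hqe hq f
    have hidx : (nbrs t₂ star₂ ∪ FfD (nbrs t₁ star₁ \ {p}) star₂ f) \ {q}
        = (nbrs t₂ star₂ \ {q}) ∪ FfD (nbrs t₁ star₁ \ {p}) star₂ f := by
      ext v
      simp only [Finset.mem_sdiff, Finset.mem_union, Finset.mem_singleton]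
      constructor
      · rintro ⟨h | h, hne⟩
        · exact Or.inl ⟨h, hne⟩
        · exact Or.inr h
      · rintro (⟨h, hne⟩ | h)
        · exact ⟨Or.inl h, hne⟩
        · exact ⟨Or.inr h, fun hh => hqFf f (hh ▸ h)⟩
    have step : rins V₃ star₂
        (delG t₁ star₁ ∪ t₂ ∪ newEdges (nbrs t₁ star₁ \ {p}) V₂ f ∪ {s(p, r₂)}, r₁) (t₃, r₃)
        = ∑ g : {v // v ∈ (nbrs t₂ star₂ \ {q}) ∪ FfD (nbrs t₁ star₁ \ {p}) star₂ f}
            → {w // w ∈ V₃},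
          Finsupp.single
            (delG (delG t₁ star₁ ∪ t₂ ∪ newEdges (nbrs t₁ star₁ \ {p}) V₂ f ∪ {s(p, r₂)}) star₂
              ∪ t₃
              ∪ newEdges ((nbrs t₂ star₂ \ {q}) ∪ FfD (nbrs t₁ star₁ \ {p}) star₂ f) V₃ g
              ∪ {s(q, r₃)}, r₁) 1 := by
      simp only [rins]
      rw [if_neg hs₂r₁, if_neg hs₂r₁, if_neg hs₂r₁]
      rw [htow, hnb, hidx, Finset.image_singleton]
    rw [step]
    refine Finset.sum_congr rfl fun g _ => ?_
    refine congrArg (fun E => Finsupp.single (E, r₁) (1:ℚ)) ?_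
    rw [hdel, hK]
    exact unionL1 _ _ _ _ _ _ _
  have main2 : ∀ g₀ : {v // v ∈ nbrs t₂ star₂ \ {q}} → {w // w ∈ V₃},
      rins (V₂.erase star₂ ∪ V₃) star₁ (t₁, r₁)
        (delG t₂ star₂ ∪ t₃ ∪ newEdges (nbrs t₂ star₂ \ {q}) V₃ g₀ ∪ {s(q, r₃)}, r₂)
      = ∑ f' : {v // v ∈ nbrs t₁ star₁ \ {p}} → {w // w ∈ V₂.erase star₂ ∪ V₃},
          Finsupp.single (K ∪ newEdges (nbrs t₂ star₂ \ {q}) V₃ g₀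
            ∪ newEdges (nbrs t₁ star₁ \ {p}) (V₂.erase star₂ ∪ V₃) f', r₁) 1 := by
    intro g₀
    have step : rins (V₂.erase star₂ ∪ V₃) star₁ (t₁, r₁)
        (delG t₂ star₂ ∪ t₃ ∪ newEdges (nbrs t₂ star₂ \ {q}) V₃ g₀ ∪ {s(q, r₃)}, r₂)
        = ∑ f' : {v // v ∈ nbrs t₁ star₁ \ {p}} → {w // w ∈ V₂.erase star₂ ∪ V₃},
            Finsupp.single (delG t₁ star₁
              ∪ (delG t₂ star₂ ∪ t₃ ∪ newEdges (nbrs t₂ star₂ \ {q}) V₃ g₀ ∪ {s(q, r₃)})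
              ∪ newEdges (nbrs t₁ star₁ \ {p}) (V₂.erase star₂ ∪ V₃) f' ∪ {s(p, r₂)}, r₁) 1 := by
      simp only [rins]
      rw [if_neg h1, if_neg h1, if_neg h1]
      rw [hp, Finset.image_singleton]
    rw [step]
    refine Finset.sum_congr rfl fun f' _ => ?_
    refine congrArg (fun E => Finsupp.single (E, r₁) (1:ℚ)) ?_
    rw [hK]
    exact unionR1 _ _ _ _ _ _ _
  calc
    rinsM V₃ star₂ (rins V₂ star₁ (t₁, r₁) (t₂, r₂)) (Finsupp.single (t₃, r₃) 1)
      = ∑ f : {v // v ∈ nbrs t₁ star₁ \ {p}} → {w // w ∈ V₂},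
          rins V₃ star₂
            (delG t₁ star₁ ∪ t₂ ∪ newEdges (nbrs t₁ star₁ \ {p}) V₂ f ∪ {s(p, r₂)}, r₁)
            (t₃, r₃) := by
        rw [lhs1, rinsM_sum_left]
    _ = ∑ f : {v // v ∈ nbrs t₁ star₁ \ {p}} → {w // w ∈ V₂},
        ∑ g : {v // v ∈ (nbrs t₂ star₂ \ {q}) ∪ FfD (nbrs t₁ star₁ \ {p}) star₂ f}
            → {w // w ∈ V₃},
          Finsupp.single (K ∪ NEmixD (nbrs t₁ star₁ \ {p}) star₂ f
            ∪ newEdges ((nbrs t₂ star₂ \ {q}) ∪ FfD (nbrs t₁ star₁ \ {p}) star₂ f) V₃ g, r₁)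
            1 := Finset.sum_congr rfl fun f _ => main1 f
    _ = ∑ g₀ : {v // v ∈ nbrs t₂ star₂ \ {q}} → {w // w ∈ V₃},
        ∑ f' : {v // v ∈ nbrs t₁ star₁ \ {p}} → {w // w ∈ V₂.erase star₂ ∪ V₃},
          Finsupp.single (K ∪ newEdges (nbrs t₂ star₂ \ {q}) V₃ g₀
            ∪ newEdges (nbrs t₁ star₁ \ {p}) (V₂.erase star₂ ∪ V₃) f', r₁) 1 := by
        refine sumeq hstar₂ hr₃ ?_ h23 ?_ K r₁
        · exact Finset.disjoint_left.mpr fun a ha => Finset.disjoint_left.mp h12 (hC₁V₁ ha)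
        · exact fun v hv => nbrs_subset_of_graphOn hgr₂ _ (Finset.sdiff_subset hv)
    _ = rinsM (V₂.erase star₂ ∪ V₃) star₁ (Finsupp.single (t₁, r₁) 1)
          (rins V₃ star₂ (t₂, r₂) (t₃, r₃)) := by
        rw [rhs1, rinsM_sum_right]
        exact Finset.sum_congr rfl fun g₀ _ => (main2 g₀).symm

end Cases

section Cases2
variable {α : Type*} [DecidableEq α]

set_option maxHeartbeats 1000000 in
lemma caseII {V₁ V₂ V₃ : Finset α} {star₁ star₂ : α}
    (h12 : Disjoint V₁ V₂) (h13 : Disjoint V₁ V₃) (h23 : Disjoint V₂ V₃)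
    (hstar₁ : star₁ ∈ V₁) (hstar₂ : star₂ ∈ V₂)
    {t₁ t₂ t₃ : Finset (Sym2 α)} {r₁ r₂ r₃ : α}
    (hr₁ : r₁ ∈ V₁) (hr₂ : r₂ ∈ V₂) (hr₃ : r₃ ∈ V₃)
    (ht₁ : IsTreeOn V₁ t₁) (ht₂ : IsTreeOn V₂ t₂)
    (h1 : star₁ ≠ r₁) (h2 : star₂ = r₂) :
    rinsM V₃ star₂ (rins V₂ star₁ (t₁, r₁) (t₂, r₂)) (Finsupp.single (t₃, r₃) 1)
      = rinsM (V₂.erase star₂ ∪ V₃) star₁ (Finsupp.single (t₁, r₁) 1)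
          (rins V₃ star₂ (t₂, r₂) (t₃, r₃)) := by
  classical
  obtain ⟨p, hpe, hpstar, hp⟩ := towards_eq_singleton ht₁ hstar₁ hr₁ h1
  have hgr₁ := ht₁.1
  have hgr₂ := ht₂.1
  have hs₂r₁ : star₂ ≠ r₁ := fun h => Finset.disjoint_left.mp h12 (h ▸ hr₁) hstar₂
  have hpV₁ : p ∈ V₁ := graphOn_vert hgr₁ hpe (by simp)
  have hC₁V₁ : nbrs t₁ star₁ \ {p} ⊆ V₁ :=
    fun v hv => nbrs_subset_of_graphOn hgr₁ _ (Finset.sdiff_subset hv)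
  have hpN₂ : p ∉ nbrs t₂ star₂ :=
    fun hh => Finset.disjoint_left.mp h12 hpV₁ (nbrs_subset_of_graphOn hgr₂ _ hh)
  have hpFf : ∀ f : {v // v ∈ nbrs t₁ star₁ \ {p}} → {w // w ∈ V₂},
      p ∉ FfD (nbrs t₁ star₁ \ {p}) star₂ f := by
    intro f hh
    have := FfD_subset f hh
    simp at this
  set K : Finset (Sym2 α) :=
    delG t₁ star₁ ∪ delG t₂ star₂ ∪ t₃ ∪ {s(p, r₃)} with hK
  have lhs1 : rins V₂ star₁ (t₁, r₁) (t₂, r₂)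
      = ∑ f : {v // v ∈ nbrs t₁ star₁ \ {p}} → {w // w ∈ V₂},
          Finsupp.single
            (delG t₁ star₁ ∪ t₂ ∪ newEdges (nbrs t₁ star₁ \ {p}) V₂ f ∪ {s(p, r₂)}, r₁) 1 := by
    simp only [rins]
    rw [if_neg h1, if_neg h1, if_neg h1, hp, Finset.image_singleton]
  have rhs1 : rins V₃ star₂ (t₂, r₂) (t₃, r₃)
      = ∑ g₀ : {v // v ∈ nbrs t₂ star₂} → {w // w ∈ V₃},
          Finsupp.single
            (delG t₂ star₂ ∪ t₃ ∪ newEdges (nbrs t₂ star₂) V₃ g₀, r₃) 1 := by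
    simp only [rins]
    rw [if_pos h2, if_pos h2, if_pos h2]
    simp only [Finset.union_empty]
  have main1 : ∀ f : {v // v ∈ nbrs t₁ star₁ \ {p}} → {w // w ∈ V₂},
      rins V₃ star₂
        (delG t₁ star₁ ∪ t₂ ∪ newEdges (nbrs t₁ star₁ \ {p}) V₂ f ∪ {s(p, r₂)}, r₁) (t₃, r₃)
      = ∑ g : {v // v ∈ nbrs t₂ star₂ ∪ FfD (nbrs t₁ star₁ \ {p}) star₂ f} → {w // w ∈ V₃},
          Finsupp.single (K ∪ NEmixD (nbrs t₁ star₁ \ {p}) star₂ f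
            ∪ newEdges (nbrs t₂ star₂ ∪ FfD (nbrs t₁ star₁ \ {p}) star₂ f) V₃ g, r₁) 1 := by
    intro f
    obtain ⟨hdel, hnb, htow⟩ :=
      tow2 ht₁ ht₂ hstar₁ hstar₂ hr₁ hr₂ h12 h2 hpe hp f
    have hidx : (nbrs t₂ star₂ ∪ FfD (nbrs t₁ star₁ \ {p}) star₂ f ∪ {p}) \ {p}
        = nbrs t₂ star₂ ∪ FfD (nbrs t₁ star₁ \ {p}) star₂ f := by
      ext v
      simp only [Finset.mem_sdiff, Finset.mem_union, Finset.mem_singleton]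
      constructor
      · rintro ⟨(h | h) | h, hne⟩
        · exact Or.inl h
        · exact Or.inr h
        · exact absurd h hne
      · rintro (h | h)
        · exact ⟨Or.inl (Or.inl h), fun hh => hpN₂ (hh ▸ h)⟩
        · exact ⟨Or.inl (Or.inr h), fun hh => hpFf f (hh ▸ h)⟩
    have step : rins V₃ star₂
        (delG t₁ star₁ ∪ t₂ ∪ newEdges (nbrs t₁ star₁ \ {p}) V₂ f ∪ {s(p, r₂)}, r₁) (t₃, r₃)
        = ∑ g : {v // v ∈ nbrs t₂ star₂ ∪ FfD (nbrs t₁ star₁ \ {p}) star₂ f} → {w // w ∈ V₃},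
          Finsupp.single
            (delG (delG t₁ star₁ ∪ t₂ ∪ newEdges (nbrs t₁ star₁ \ {p}) V₂ f ∪ {s(p, r₂)}) star₂
              ∪ t₃
              ∪ newEdges (nbrs t₂ star₂ ∪ FfD (nbrs t₁ star₁ \ {p}) star₂ f) V₃ g
              ∪ {s(p, r₃)}, r₁) 1 := by
      simp only [rins]
      rw [if_neg hs₂r₁, if_neg hs₂r₁, if_neg hs₂r₁]
      rw [htow, hnb, hidx, Finset.image_singleton]
    rw [step]
    refine Finset.sum_congr rfl fun g _ => ?_
    refine congrArg (fun E => Finsupp.single (E, r₁) (1:ℚ)) ?_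
    rw [hdel, hK]
    exact unionL2 _ _ _ _ _ _
  have main2 : ∀ g₀ : {v // v ∈ nbrs t₂ star₂} → {w // w ∈ V₃},
      rins (V₂.erase star₂ ∪ V₃) star₁ (t₁, r₁)
        (delG t₂ star₂ ∪ t₃ ∪ newEdges (nbrs t₂ star₂) V₃ g₀, r₃)
      = ∑ f' : {v // v ∈ nbrs t₁ star₁ \ {p}} → {w // w ∈ V₂.erase star₂ ∪ V₃},
          Finsupp.single (K ∪ newEdges (nbrs t₂ star₂) V₃ g₀
            ∪ newEdges (nbrs t₁ star₁ \ {p}) (V₂.erase star₂ ∪ V₃) f', r₁) 1 := by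
    intro g₀
    have step : rins (V₂.erase star₂ ∪ V₃) star₁ (t₁, r₁)
        (delG t₂ star₂ ∪ t₃ ∪ newEdges (nbrs t₂ star₂) V₃ g₀, r₃)
        = ∑ f' : {v // v ∈ nbrs t₁ star₁ \ {p}} → {w // w ∈ V₂.erase star₂ ∪ V₃},
            Finsupp.single (delG t₁ star₁
              ∪ (delG t₂ star₂ ∪ t₃ ∪ newEdges (nbrs t₂ star₂) V₃ g₀)
              ∪ newEdges (nbrs t₁ star₁ \ {p}) (V₂.erase star₂ ∪ V₃) f' ∪ {s(p, r₃)}, r₁) 1 := by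
      simp only [rins]
      rw [if_neg h1, if_neg h1, if_neg h1]
      rw [hp, Finset.image_singleton]
    rw [step]
    refine Finset.sum_congr rfl fun f' _ => ?_
    refine congrArg (fun E => Finsupp.single (E, r₁) (1:ℚ)) ?_
    rw [hK]
    exact unionR2 _ _ _ _ _ _
  calc
    rinsM V₃ star₂ (rins V₂ star₁ (t₁, r₁) (t₂, r₂)) (Finsupp.single (t₃, r₃) 1)
      = ∑ f : {v // v ∈ nbrs t₁ star₁ \ {p}} → {w // w ∈ V₂},
          rins V₃ star₂
            (delG t₁ star₁ ∪ t₂ ∪ newEdges (nbrs t₁ star₁ \ {p}) V₂ f ∪ {s(p, r₂)}, r₁)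
            (t₃, r₃) := by
        rw [lhs1, rinsM_sum_left]
    _ = ∑ f : {v // v ∈ nbrs t₁ star₁ \ {p}} → {w // w ∈ V₂},
        ∑ g : {v // v ∈ nbrs t₂ star₂ ∪ FfD (nbrs t₁ star₁ \ {p}) star₂ f} → {w // w ∈ V₃},
          Finsupp.single (K ∪ NEmixD (nbrs t₁ star₁ \ {p}) star₂ f
            ∪ newEdges (nbrs t₂ star₂ ∪ FfD (nbrs t₁ star₁ \ {p}) star₂ f) V₃ g, r₁) 1 :=
        Finset.sum_congr rfl fun f _ => main1 f
    _ = ∑ g₀ : {v // v ∈ nbrs t₂ star₂} → {w // w ∈ V₃},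
        ∑ f' : {v // v ∈ nbrs t₁ star₁ \ {p}} → {w // w ∈ V₂.erase star₂ ∪ V₃},
          Finsupp.single (K ∪ newEdges (nbrs t₂ star₂) V₃ g₀
            ∪ newEdges (nbrs t₁ star₁ \ {p}) (V₂.erase star₂ ∪ V₃) f', r₁) 1 := by
        refine sumeq hstar₂ hr₃ ?_ h23 ?_ K r₁
        · exact Finset.disjoint_left.mpr fun a ha => Finset.disjoint_left.mp h12 (hC₁V₁ ha)
        · exact nbrs_subset_of_graphOn hgr₂ _
    _ = rinsM (V₂.erase star₂ ∪ V₃) star₁ (Finsupp.single (t₁, r₁) 1)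
          (rins V₃ star₂ (t₂, r₂) (t₃, r₃)) := by
        rw [rhs1, rinsM_sum_right]
        exact Finset.sum_congr rfl fun g₀ _ => (main2 g₀).symm

end Cases2

section Cases3
variable {α : Type*} [DecidableEq α]

set_option maxHeartbeats 1000000 in
lemma caseIII {V₁ V₂ V₃ : Finset α} {star₁ star₂ : α}
    (h12 : Disjoint V₁ V₂) (h13 : Disjoint V₁ V₃) (h23 : Disjoint V₂ V₃)
    (hstar₁ : star₁ ∈ V₁) (hstar₂ : star₂ ∈ V₂)
    {t₁ t₂ t₃ : Finset (Sym2 α)} {r₁ r₂ r₃ : α}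
    (hr₁ : r₁ ∈ V₁) (hr₂ : r₂ ∈ V₂) (hr₃ : r₃ ∈ V₃)
    (ht₁ : IsTreeOn V₁ t₁) (ht₂ : IsTreeOn V₂ t₂)
    (h1 : star₁ = r₁) (h2 : star₂ ≠ r₂) :
    rinsM V₃ star₂ (rins V₂ star₁ (t₁, r₁) (t₂, r₂)) (Finsupp.single (t₃, r₃) 1)
      = rinsM (V₂.erase star₂ ∪ V₃) star₁ (Finsupp.single (t₁, r₁) 1)
          (rins V₃ star₂ (t₂, r₂) (t₃, r₃)) := by
  classical
  obtain ⟨q, hqe, hqstar, hq⟩ := towards_eq_singleton ht₂ hstar₂ hr₂ h2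
  have hgr₁ := ht₁.1
  have hgr₂ := ht₂.1
  have hs₂r₂' : star₂ ≠ r₂ := h2
  have hqV₂ : q ∈ V₂ := graphOn_vert hgr₂ hqe (by simp)
  have hN₁V₁ : nbrs t₁ star₁ ⊆ V₁ := nbrs_subset_of_graphOn hgr₁ _
  have hqFf : ∀ f : {v // v ∈ nbrs t₁ star₁} → {w // w ∈ V₂},
      q ∉ FfD (nbrs t₁ star₁) star₂ f := by
    intro f hh
    exact Finset.disjoint_left.mp h12 (hN₁V₁ (FfD_subset f hh)) hqV₂
  set K : Finset (Sym2 α) :=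
    delG t₁ star₁ ∪ delG t₂ star₂ ∪ t₃ ∪ {s(q, r₃)} with hK
  have lhs1 : rins V₂ star₁ (t₁, r₁) (t₂, r₂)
      = ∑ f : {v // v ∈ nbrs t₁ star₁} → {w // w ∈ V₂},
          Finsupp.single
            (delG t₁ star₁ ∪ t₂ ∪ newEdges (nbrs t₁ star₁) V₂ f, r₂) 1 := by
    simp only [rins]
    rw [if_pos h1, if_pos h1, if_pos h1]
    simp only [Finset.union_empty]
  have rhs1 : rins V₃ star₂ (t₂, r₂) (t₃, r₃)
      = ∑ g₀ : {v // v ∈ nbrs t₂ star₂ \ {q}} → {w // w ∈ V₃},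
          Finsupp.single
            (delG t₂ star₂ ∪ t₃ ∪ newEdges (nbrs t₂ star₂ \ {q}) V₃ g₀ ∪ {s(q, r₃)}, r₂) 1 := by
    simp only [rins]
    rw [if_neg h2, if_neg h2, if_neg h2, hq, Finset.image_singleton]
  have main1 : ∀ f : {v // v ∈ nbrs t₁ star₁} → {w // w ∈ V₂},
      rins V₃ star₂
        (delG t₁ star₁ ∪ t₂ ∪ newEdges (nbrs t₁ star₁) V₂ f, r₂) (t₃, r₃)
      = ∑ g : {v // v ∈ (nbrs t₂ star₂ \ {q}) ∪ FfD (nbrs t₁ star₁) star₂ f} → {w // w ∈ V₃},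
          Finsupp.single (K ∪ NEmixD (nbrs t₁ star₁) star₂ f
            ∪ newEdges ((nbrs t₂ star₂ \ {q}) ∪ FfD (nbrs t₁ star₁) star₂ f) V₃ g, r₂) 1 := by
    intro f
    obtain ⟨hdel, hnb, htow⟩ :=
      tow3 ht₁ ht₂ hstar₁ hstar₂ hr₂ h12 h2 hqe hq f
    have hidx : (nbrs t₂ star₂ ∪ FfD (nbrs t₁ star₁) star₂ f) \ {q}
        = (nbrs t₂ star₂ \ {q}) ∪ FfD (nbrs t₁ star₁) star₂ f := by
      ext v
      simp only [Finset.mem_sdiff, Finset.mem_union, Finset.mem_singleton]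
      constructor
      · rintro ⟨h | h, hne⟩
        · exact Or.inl ⟨h, hne⟩
        · exact Or.inr h
      · rintro (⟨h, hne⟩ | h)
        · exact ⟨Or.inl h, hne⟩
        · exact ⟨Or.inr h, fun hh => hqFf f (hh ▸ h)⟩
    have step : rins V₃ star₂
        (delG t₁ star₁ ∪ t₂ ∪ newEdges (nbrs t₁ star₁) V₂ f, r₂) (t₃, r₃)
        = ∑ g : {v // v ∈ (nbrs t₂ star₂ \ {q}) ∪ FfD (nbrs t₁ star₁) star₂ f} → {w // w ∈ V₃},
          Finsupp.single
            (delG (delG t₁ star₁ ∪ t₂ ∪ newEdges (nbrs t₁ star₁) V₂ f) star₂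
              ∪ t₃
              ∪ newEdges ((nbrs t₂ star₂ \ {q}) ∪ FfD (nbrs t₁ star₁) star₂ f) V₃ g
              ∪ {s(q, r₃)}, r₂) 1 := by
      simp only [rins]
      rw [if_neg h2, if_neg h2, if_neg h2]
      rw [htow, hnb, hidx, Finset.image_singleton]
    rw [step]
    refine Finset.sum_congr rfl fun g _ => ?_
    refine congrArg (fun E => Finsupp.single (E, r₂) (1:ℚ)) ?_
    rw [hdel, hK]
    exact unionL2 _ _ _ _ _ _
  have main2 : ∀ g₀ : {v // v ∈ nbrs t₂ star₂ \ {q}} → {w // w ∈ V₃},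
      rins (V₂.erase star₂ ∪ V₃) star₁ (t₁, r₁)
        (delG t₂ star₂ ∪ t₃ ∪ newEdges (nbrs t₂ star₂ \ {q}) V₃ g₀ ∪ {s(q, r₃)}, r₂)
      = ∑ f' : {v // v ∈ nbrs t₁ star₁} → {w // w ∈ V₂.erase star₂ ∪ V₃},
          Finsupp.single (K ∪ newEdges (nbrs t₂ star₂ \ {q}) V₃ g₀
            ∪ newEdges (nbrs t₁ star₁) (V₂.erase star₂ ∪ V₃) f', r₂) 1 := by
    intro g₀
    have step : rins (V₂.erase star₂ ∪ V₃) star₁ (t₁, r₁)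
        (delG t₂ star₂ ∪ t₃ ∪ newEdges (nbrs t₂ star₂ \ {q}) V₃ g₀ ∪ {s(q, r₃)}, r₂)
        = ∑ f' : {v // v ∈ nbrs t₁ star₁} → {w // w ∈ V₂.erase star₂ ∪ V₃},
            Finsupp.single (delG t₁ star₁
              ∪ (delG t₂ star₂ ∪ t₃ ∪ newEdges (nbrs t₂ star₂ \ {q}) V₃ g₀ ∪ {s(q, r₃)})
              ∪ newEdges (nbrs t₁ star₁) (V₂.erase star₂ ∪ V₃) f', r₂) 1 := by
      simp only [rins]
      rw [if_pos h1, if_pos h1, if_pos h1]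
      simp only [Finset.union_empty]
    rw [step]
    refine Finset.sum_congr rfl fun f' _ => ?_
    refine congrArg (fun E => Finsupp.single (E, r₂) (1:ℚ)) ?_
    rw [hK]
    exact unionR3 _ _ _ _ _ _
  calc
    rinsM V₃ star₂ (rins V₂ star₁ (t₁, r₁) (t₂, r₂)) (Finsupp.single (t₃, r₃) 1)
      = ∑ f : {v // v ∈ nbrs t₁ star₁} → {w // w ∈ V₂},
          rins V₃ star₂
            (delG t₁ star₁ ∪ t₂ ∪ newEdges (nbrs t₁ star₁) V₂ f, r₂) (t₃, r₃) := by
        rw [lhs1, rinsM_sum_left]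
    _ = ∑ f : {v // v ∈ nbrs t₁ star₁} → {w // w ∈ V₂},
        ∑ g : {v // v ∈ (nbrs t₂ star₂ \ {q}) ∪ FfD (nbrs t₁ star₁) star₂ f} → {w // w ∈ V₃},
          Finsupp.single (K ∪ NEmixD (nbrs t₁ star₁) star₂ f
            ∪ newEdges ((nbrs t₂ star₂ \ {q}) ∪ FfD (nbrs t₁ star₁) star₂ f) V₃ g, r₂) 1 :=
        Finset.sum_congr rfl fun f _ => main1 f
    _ = ∑ g₀ : {v // v ∈ nbrs t₂ star₂ \ {q}} → {w // w ∈ V₃},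
        ∑ f' : {v // v ∈ nbrs t₁ star₁} → {w // w ∈ V₂.erase star₂ ∪ V₃},
          Finsupp.single (K ∪ newEdges (nbrs t₂ star₂ \ {q}) V₃ g₀
            ∪ newEdges (nbrs t₁ star₁) (V₂.erase star₂ ∪ V₃) f', r₂) 1 := by
        refine sumeq hstar₂ hr₃ ?_ h23 ?_ K r₂
        · exact Finset.disjoint_left.mpr fun a ha => Finset.disjoint_left.mp h12 (hN₁V₁ ha)
        · exact fun v hv => nbrs_subset_of_graphOn hgr₂ _ (Finset.sdiff_subset hv)
    _ = rinsM (V₂.erase star₂ ∪ V₃) star₁ (Finsupp.single (t₁, r₁) 1)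
          (rins V₃ star₂ (t₂, r₂) (t₃, r₃)) := by
        rw [rhs1, rinsM_sum_right]
        exact Finset.sum_congr rfl fun g₀ _ => (main2 g₀).symm

set_option maxHeartbeats 1000000 in
lemma caseIV {V₁ V₂ V₃ : Finset α} {star₁ star₂ : α}
    (h12 : Disjoint V₁ V₂) (h13 : Disjoint V₁ V₃) (h23 : Disjoint V₂ V₃)
    (hstar₁ : star₁ ∈ V₁) (hstar₂ : star₂ ∈ V₂)
    {t₁ t₂ t₃ : Finset (Sym2 α)} {r₁ r₂ r₃ : α}
    (hr₁ : r₁ ∈ V₁) (hr₂ : r₂ ∈ V₂) (hr₃ : r₃ ∈ V₃)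
    (ht₁ : IsTreeOn V₁ t₁) (ht₂ : IsTreeOn V₂ t₂)
    (h1 : star₁ = r₁) (h2 : star₂ = r₂) :
    rinsM V₃ star₂ (rins V₂ star₁ (t₁, r₁) (t₂, r₂)) (Finsupp.single (t₃, r₃) 1)
      = rinsM (V₂.erase star₂ ∪ V₃) star₁ (Finsupp.single (t₁, r₁) 1)
          (rins V₃ star₂ (t₂, r₂) (t₃, r₃)) := by
  classical
  have hgr₁ := ht₁.1
  have hgr₂ := ht₂.1
  have hs₂r₂ : star₂ = r₂ := h2
  have hN₁V₁ : nbrs t₁ star₁ ⊆ V₁ := nbrs_subset_of_graphOn hgr₁ _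
  set K : Finset (Sym2 α) :=
    delG t₁ star₁ ∪ delG t₂ star₂ ∪ t₃ with hK
  have lhs1 : rins V₂ star₁ (t₁, r₁) (t₂, r₂)
      = ∑ f : {v // v ∈ nbrs t₁ star₁} → {w // w ∈ V₂},
          Finsupp.single
            (delG t₁ star₁ ∪ t₂ ∪ newEdges (nbrs t₁ star₁) V₂ f, r₂) 1 := by
    simp only [rins]
    rw [if_pos h1, if_pos h1, if_pos h1]
    simp only [Finset.union_empty]
  have rhs1 : rins V₃ star₂ (t₂, r₂) (t₃, r₃)
      = ∑ g₀ : {v // v ∈ nbrs t₂ star₂} → {w // w ∈ V₃},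
          Finsupp.single
            (delG t₂ star₂ ∪ t₃ ∪ newEdges (nbrs t₂ star₂) V₃ g₀, r₃) 1 := by
    simp only [rins]
    rw [if_pos h2, if_pos h2, if_pos h2]
    simp only [Finset.union_empty]
  have main1 : ∀ f : {v // v ∈ nbrs t₁ star₁} → {w // w ∈ V₂},
      rins V₃ star₂
        (delG t₁ star₁ ∪ t₂ ∪ newEdges (nbrs t₁ star₁) V₂ f, r₂) (t₃, r₃)
      = ∑ g : {v // v ∈ nbrs t₂ star₂ ∪ FfD (nbrs t₁ star₁) star₂ f} → {w // w ∈ V₃},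
          Finsupp.single (K ∪ NEmixD (nbrs t₁ star₁) star₂ f
            ∪ newEdges (nbrs t₂ star₂ ∪ FfD (nbrs t₁ star₁) star₂ f) V₃ g, r₃) 1 := by
    intro f
    obtain ⟨hdel, hnb⟩ := delnb4 (t₂ := t₂) ht₁ hstar₂ h12 f
    have step : rins V₃ star₂
        (delG t₁ star₁ ∪ t₂ ∪ newEdges (nbrs t₁ star₁) V₂ f, r₂) (t₃, r₃)
        = ∑ g : {v // v ∈ nbrs t₂ star₂ ∪ FfD (nbrs t₁ star₁) star₂ f} → {w // w ∈ V₃},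
          Finsupp.single
            (delG (delG t₁ star₁ ∪ t₂ ∪ newEdges (nbrs t₁ star₁) V₂ f) star₂
              ∪ t₃
              ∪ newEdges (nbrs t₂ star₂ ∪ FfD (nbrs t₁ star₁) star₂ f) V₃ g, r₃) 1 := by
      simp only [rins]
      rw [if_pos h2, if_pos h2, if_pos h2]
      rw [hnb]
      simp only [Finset.union_empty]
    rw [step]
    refine Finset.sum_congr rfl fun g _ => ?_
    refine congrArg (fun E => Finsupp.single (E, r₃) (1:ℚ)) ?_
    rw [hdel, hK]
    exact unionL4 _ _ _ _ _
  have main2 : ∀ g₀ : {v // v ∈ nbrs t₂ star₂} → {w // w ∈ V₃},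
      rins (V₂.erase star₂ ∪ V₃) star₁ (t₁, r₁)
        (delG t₂ star₂ ∪ t₃ ∪ newEdges (nbrs t₂ star₂) V₃ g₀, r₃)
      = ∑ f' : {v // v ∈ nbrs t₁ star₁} → {w // w ∈ V₂.erase star₂ ∪ V₃},
          Finsupp.single (K ∪ newEdges (nbrs t₂ star₂) V₃ g₀
            ∪ newEdges (nbrs t₁ star₁) (V₂.erase star₂ ∪ V₃) f', r₃) 1 := by
    intro g₀
    have step : rins (V₂.erase star₂ ∪ V₃) star₁ (t₁, r₁)
        (delG t₂ star₂ ∪ t₃ ∪ newEdges (nbrs t₂ star₂) V₃ g₀, r₃)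
        = ∑ f' : {v // v ∈ nbrs t₁ star₁} → {w // w ∈ V₂.erase star₂ ∪ V₃},
            Finsupp.single (delG t₁ star₁
              ∪ (delG t₂ star₂ ∪ t₃ ∪ newEdges (nbrs t₂ star₂) V₃ g₀)
              ∪ newEdges (nbrs t₁ star₁) (V₂.erase star₂ ∪ V₃) f', r₃) 1 := by
      simp only [rins]
      rw [if_pos h1, if_pos h1, if_pos h1]
      simp only [Finset.union_empty]
    rw [step]
    refine Finset.sum_congr rfl fun f' _ => ?_
    refine congrArg (fun E => Finsupp.single (E, r₃) (1:ℚ)) ?_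
    rw [hK]
    exact unionR4 _ _ _ _ _
  calc
    rinsM V₃ star₂ (rins V₂ star₁ (t₁, r₁) (t₂, r₂)) (Finsupp.single (t₃, r₃) 1)
      = ∑ f : {v // v ∈ nbrs t₁ star₁} → {w // w ∈ V₂},
          rins V₃ star₂
            (delG t₁ star₁ ∪ t₂ ∪ newEdges (nbrs t₁ star₁) V₂ f, r₂) (t₃, r₃) := by
        rw [lhs1, rinsM_sum_left]
    _ = ∑ f : {v // v ∈ nbrs t₁ star₁} → {w // w ∈ V₂},
        ∑ g : {v // v ∈ nbrs t₂ star₂ ∪ FfD (nbrs t₁ star₁) star₂ f} → {w // w ∈ V₃},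
          Finsupp.single (K ∪ NEmixD (nbrs t₁ star₁) star₂ f
            ∪ newEdges (nbrs t₂ star₂ ∪ FfD (nbrs t₁ star₁) star₂ f) V₃ g, r₃) 1 :=
        Finset.sum_congr rfl fun f _ => main1 f
    _ = ∑ g₀ : {v // v ∈ nbrs t₂ star₂} → {w // w ∈ V₃},
        ∑ f' : {v // v ∈ nbrs t₁ star₁} → {w // w ∈ V₂.erase star₂ ∪ V₃},
          Finsupp.single (K ∪ newEdges (nbrs t₂ star₂) V₃ g₀
            ∪ newEdges (nbrs t₁ star₁) (V₂.erase star₂ ∪ V₃) f', r₃) 1 := by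
        refine sumeq hstar₂ hr₃ ?_ h23 ?_ K r₃
        · exact Finset.disjoint_left.mpr fun a ha => Finset.disjoint_left.mp h12 (hN₁V₁ ha)
        · exact nbrs_subset_of_graphOn hgr₂ _
    _ = rinsM (V₂.erase star₂ ∪ V₃) star₁ (Finsupp.single (t₁, r₁) 1)
          (rins V₃ star₂ (t₂, r₂) (t₃, r₃)) := by
        rw [rhs1, rinsM_sum_right]
        exact Finset.sum_congr rfl fun g₀ _ => (main2 g₀).symm

end Cases3

theorem sequential_associativity_of_rooted_insertion'
    {α : Type*} [DecidableEq α]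
    (V₁ V₂ V₃ : Finset α) (star₁ star₂ : α)
    (h12 : Disjoint V₁ V₂) (h13 : Disjoint V₁ V₃) (h23 : Disjoint V₂ V₃)
    (hstar₁ : star₁ ∈ V₁) (hstar₂ : star₂ ∈ V₂)
    (t₁ t₂ t₃ : Finset (Sym2 α)) (r₁ r₂ r₃ : α)
    (hr₁ : r₁ ∈ V₁) (hr₂ : r₂ ∈ V₂) (hr₃ : r₃ ∈ V₃)
    (ht₁ : IsTreeOn V₁ t₁) (ht₂ : IsTreeOn V₂ t₂) (ht₃ : IsTreeOn V₃ t₃) :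
    rinsM V₃ star₂
        (rinsM V₂ star₁ (Finsupp.single (t₁, r₁) 1) (Finsupp.single (t₂, r₂) 1))
        (Finsupp.single (t₃, r₃) 1)
      = rinsM (V₂.erase star₂ ∪ V₃) star₁ (Finsupp.single (t₁, r₁) 1)
          (rinsM V₃ star₂ (Finsupp.single (t₂, r₂) 1) (Finsupp.single (t₃, r₃) 1)) := by
  classical
  rw [rinsM_single_single, rinsM_single_single]
  by_cases h1 : star₁ = r₁ <;> by_cases h2 : star₂ = r₂
  · exact caseIV h12 h13 h23 hstar₁ hstar₂ hr₁ hr₂ hr₃ ht₁ ht₂ h1 h2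
  · exact caseIII h12 h13 h23 hstar₁ hstar₂ hr₁ hr₂ hr₃ ht₁ ht₂ h1 h2
  · exact caseII h12 h13 h23 hstar₁ hstar₂ hr₁ hr₂ hr₃ ht₁ ht₂ h1 h2
  · exact caseI h12 h13 h23 hstar₁ hstar₂ hr₁ hr₂ hr₃ ht₁ ht₂ h1 h2

/-- **Sequential associativity of rooted insertion of rooted trees.** -/
theorem sequential_associativity_of_rooted_insertion
    (V₁ V₂ V₃ : Finset α) (star₁ star₂ : α)
    (h12 : Disjoint V₁ V₂) (h13 : Disjoint V₁ V₃) (h23 : Disjoint V₂ V₃)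
    (hstar₁ : star₁ ∈ V₁) (hstar₂ : star₂ ∈ V₂)
    (t₁ t₂ t₃ : Finset (Sym2 α)) (r₁ r₂ r₃ : α)
    (hr₁ : r₁ ∈ V₁) (hr₂ : r₂ ∈ V₂) (hr₃ : r₃ ∈ V₃)
    (ht₁ : IsTreeOn V₁ t₁) (ht₂ : IsTreeOn V₂ t₂) (ht₃ : IsTreeOn V₃ t₃) :
    rinsM V₃ star₂
        (rinsM V₂ star₁ (Finsupp.single (t₁, r₁) 1) (Finsupp.single (t₂, r₂) 1))
        (Finsupp.single (t₃, r₃) 1)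
      = rinsM (V₂.erase star₂ ∪ V₃) star₁ (Finsupp.single (t₁, r₁) 1)
          (rinsM V₃ star₂ (Finsupp.single (t₂, r₂) 1) (Finsupp.single (t₃, r₃) 1)) := by
  exact sequential_associativity_of_rooted_insertion' V₁ V₂ V₃ star₁ star₂ h12 h13 h23
    hstar₁ hstar₂ t₁ t₂ t₃ r₁ r₂ r₃ hr₁ hr₂ hr₃ ht₁ ht₂ ht₃
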